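/- arXiv:0705.3658 — 10 statements merged into one kernel-verified Lean document; each statement's English description precedes it below -/
import Mathlib

section
/- For every real 2×2 matrix A with det A = 1, the matrix φ(A) satisfies φ(A)ᵀ · R · φ(A) = R and det φ(A) = 1; in other words φ maps SL(2,ℝ) into the special orthogonal group of the indefinite form given by R. -/
open Matrix

/-- The symmetric square of a real 2×2 matrix with respect to the basis
`x², √2·x·y, y²`. -/
noncomputable def symSq (A : Matrix (Fin 2) (Fin 2) ℝ) : Matrix (Fin 3) (Fin 3) ℝ :=
  !![A 0 0 ^ 2, Real.sqrt 2 * A 0 0 * A 0 1, A 0 1 ^ 2;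
     Real.sqrt 2 * A 0 0 * A 1 0, A 0 0 * A 1 1 + A 0 1 * A 1 0, Real.sqrt 2 * A 0 1 * A 1 1;
     A 1 0 ^ 2, Real.sqrt 2 * A 1 0 * A 1 1, A 1 1 ^ 2]

/-- The reference indefinite bilinear form of signature (2,1). -/
def Rform : Matrix (Fin 3) (Fin 3) ℝ :=
  !![0, 0, -1; 0, 1, 0; -1, 0, 0]

theorem symSq_mem_SO (A : Matrix (Fin 2) (Fin 2) ℝ) (hA : A.det = 1) :
    (symSq A)ᵀ * Rform * symSq A = Rform ∧ (symSq A).det = 1 := by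
  rw [Matrix.det_fin_two] at hA
  have h2 : (Real.sqrt 2) ^ 2 = 2 := Real.sq_sqrt (by norm_num)
  constructor
  · ext i j
    fin_cases i <;> fin_cases j <;>
      simp [symSq, Rform, Matrix.mul_apply, Fin.sum_univ_succ, Matrix.vecHead,
        Matrix.vecTail] <;>
      ring_nf <;> simp only [h2] <;> nlinarith [hA]
  · rw [symSq, Matrix.det_fin_three]
    simp [Matrix.vecHead, Matrix.vecTail]
    ring_nf
    simp only [h2]
    linear_combination ((A 0 0 * A 1 1 - A 0 1 * A 1 0) ^ 2 +
      (A 0 0 * A 1 1 - A 0 1 * A 1 0) + 1) * hA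
end

section
/- If A is a real 2×2 matrix with det A = 1 such that every entry of φ(A) is an integer, then (trace A)² is an integer. -/
open Matrix

theorem sq_trace_isInt_of_symSq_isInt (A : Matrix (Fin 2) (Fin 2) ℝ)
    (hA : A.det = 1) (hInt : ∀ i j, ∃ n : ℤ, symSq A i j = (n : ℝ)) :
    ∃ n : ℤ, A.trace ^ 2 = (n : ℝ) := by
  obtain ⟨n00, h00⟩ := hInt 0 0
  obtain ⟨n11, h11⟩ := hInt 1 1
  obtain ⟨n22, h22⟩ := hInt 2 2
  simp [symSq, Matrix.cons_val_one, Matrix.head_cons, Matrix.cons_val_zero,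
    show (2:Fin 3) = ⟨2, by norm_num⟩ from rfl] at h00 h11 h22
  rw [Matrix.det_fin_two] at hA
  refine ⟨n00 + n22 + n11 + 1, ?_⟩
  rw [Matrix.trace_fin_two]
  push_cast
  nlinarith [h00, h11, h22, hA]
end

section
/- Let U ⊆ ℂ be open, let a₂, a₁, a₀ : ℂ → ℂ be differentiable on U, and let f, g : ℂ → ℂ be three times differentiable on U. If both f and g are solutions on U of the second-order linear ODE a₂·y'' + a₁·y' + a₀·y = 0, then the product h = f·g is a solution on U of the symmetric square, the third-order linear ODE a₂²·y''' + 3·a₁·a₂·y'' + (a₂·(4·a₀ + a₁') + a₁·(2·a₁ − a₂'))·y' + 2·(a₂·a₀' + a₀·(2·a₁ − a₂'))·y = 0 (all derivatives of coefficients taken on U). -/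
private lemma deriv_of_sol (U : Set ℂ) (hU : IsOpen U) (a₂ a₁ a₀ f : ℂ → ℂ)
    (ha₂ : DifferentiableOn ℂ a₂ U) (ha₁ : DifferentiableOn ℂ a₁ U)
    (ha₀ : DifferentiableOn ℂ a₀ U)
    (hf : DifferentiableOn ℂ f U) (hf' : DifferentiableOn ℂ (deriv f) U)
    (hf'' : DifferentiableOn ℂ (deriv (deriv f)) U)
    (hsol : ∀ z ∈ U, a₂ z * deriv (deriv f) z + a₁ z * deriv f z + a₀ z * f z = 0) :
    ∀ z ∈ U,
      deriv a₂ z * deriv (deriv f) z + a₂ z * deriv (deriv (deriv f)) z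
        + (deriv a₁ z * deriv f z + a₁ z * deriv (deriv f) z)
        + (deriv a₀ z * f z + a₀ z * deriv f z) = 0 := by
  intro z hz
  have hmem := hU.mem_nhds hz
  have H : HasDerivAt (fun w => a₂ w * deriv (deriv f) w + a₁ w * deriv f w + a₀ w * f w)
      (deriv a₂ z * deriv (deriv f) z + a₂ z * deriv (deriv (deriv f)) z
        + (deriv a₁ z * deriv f z + a₁ z * deriv (deriv f) z)
        + (deriv a₀ z * f z + a₀ z * deriv f z)) z :=
    ((((ha₂.differentiableAt hmem).hasDerivAt.mul
        ((hf''.differentiableAt hmem).hasDerivAt)).add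
      ((ha₁.differentiableAt hmem).hasDerivAt.mul
        ((hf'.differentiableAt hmem).hasDerivAt))).add
      ((ha₀.differentiableAt hmem).hasDerivAt.mul
        ((hf.differentiableAt hmem).hasDerivAt)))
  have hzero : (fun w => a₂ w * deriv (deriv f) w + a₁ w * deriv f w + a₀ w * f w)
      =ᶠ[nhds z] fun _ => (0:ℂ) := by
    filter_upwards [hmem] with w hw
    exact hsol w hw
  have := hzero.deriv_eq
  rw [H.deriv] at this
  simpa using this

/-- If `f` and `g` solve the second-order linear ODE `a₂·y'' + a₁·y' + a₀·y = 0` on an open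
set `U`, then `f·g` solves the symmetric square, the third-order linear ODE
`a₂²·y''' + 3a₁a₂·y'' + (a₂(4a₀+a₁') + a₁(2a₁−a₂'))·y' + 2(a₂a₀' + a₀(2a₁−a₂'))·y = 0`. -/
theorem mul_solution_symmetric_square
    (U : Set ℂ) (hU : IsOpen U) (a₂ a₁ a₀ f g : ℂ → ℂ)
    (ha₂ : DifferentiableOn ℂ a₂ U) (ha₁ : DifferentiableOn ℂ a₁ U)
    (ha₀ : DifferentiableOn ℂ a₀ U)
    (hf : DifferentiableOn ℂ f U) (hf' : DifferentiableOn ℂ (deriv f) U)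
    (hf'' : DifferentiableOn ℂ (deriv (deriv f)) U)
    (hg : DifferentiableOn ℂ g U) (hg' : DifferentiableOn ℂ (deriv g) U)
    (hg'' : DifferentiableOn ℂ (deriv (deriv g)) U)
    (hfsol : ∀ z ∈ U, a₂ z * deriv (deriv f) z + a₁ z * deriv f z + a₀ z * f z = 0)
    (hgsol : ∀ z ∈ U, a₂ z * deriv (deriv g) z + a₁ z * deriv g z + a₀ z * g z = 0) :
    ∀ z ∈ U,
      (a₂ z) ^ 2 * deriv (deriv (deriv (fun w => f w * g w))) z
        + 3 * a₁ z * a₂ z * deriv (deriv (fun w => f w * g w)) z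
        + (a₂ z * (4 * a₀ z + deriv a₁ z) + a₁ z * (2 * a₁ z - deriv a₂ z))
            * deriv (fun w => f w * g w) z
        + 2 * (a₂ z * deriv a₀ z + a₀ z * (2 * a₁ z - deriv a₂ z)) * (f z * g z) = 0 := by
  -- first derivative of the product on U
  have e1 : ∀ w ∈ U, deriv (fun w => f w * g w) w = deriv f w * g w + f w * deriv g w := by
    intro w hw
    have hmem := hU.mem_nhds hw
    exact deriv_mul (hf.differentiableAt hmem) (hg.differentiableAt hmem)
  -- second derivative of the product on U
  have e2 : ∀ w ∈ U, deriv (deriv (fun w => f w * g w)) w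
      = deriv (deriv f) w * g w + 2 * (deriv f w * deriv g w) + f w * deriv (deriv g) w := by
    intro w hw
    have hmem := hU.mem_nhds hw
    have heq : deriv (fun w => f w * g w)
        =ᶠ[nhds w] fun u => deriv f u * g u + f u * deriv g u := by
      filter_upwards [hmem] with u hu
      exact e1 u hu
    rw [heq.deriv_eq]
    have H : HasDerivAt (fun u => deriv f u * g u + f u * deriv g u)
        (deriv (deriv f) w * g w + 2 * (deriv f w * deriv g w) + f w * deriv (deriv g) w) w := by
      have := ((hf'.differentiableAt hmem).hasDerivAt.mul
          ((hg.differentiableAt hmem).hasDerivAt)).add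
        ((hf.differentiableAt hmem).hasDerivAt.mul
          ((hg'.differentiableAt hmem).hasDerivAt))
      exact this.congr_deriv (by ring)
    exact H.deriv
  intro z hz
  have hmem := hU.mem_nhds hz
  -- third derivative at z
  have e3 : deriv (deriv (deriv (fun w => f w * g w))) z
      = deriv (deriv (deriv f)) z * g z + 3 * (deriv (deriv f) z * deriv g z)
        + 3 * (deriv f z * deriv (deriv g) z) + f z * deriv (deriv (deriv g)) z := by
    have heq : deriv (deriv (fun w => f w * g w))
        =ᶠ[nhds z] fun u => deriv (deriv f) u * g u + 2 * (deriv f u * deriv g u)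
          + f u * deriv (deriv g) u := by
      filter_upwards [hmem] with u hu
      exact e2 u hu
    rw [heq.deriv_eq]
    have H : HasDerivAt (fun u => deriv (deriv f) u * g u + 2 * (deriv f u * deriv g u)
        + f u * deriv (deriv g) u)
        (deriv (deriv (deriv f)) z * g z + 3 * (deriv (deriv f) z * deriv g z)
          + 3 * (deriv f z * deriv (deriv g) z) + f z * deriv (deriv (deriv g)) z) z := by
      have := (((hf''.differentiableAt hmem).hasDerivAt.mul
            ((hg.differentiableAt hmem).hasDerivAt)).add
          ((((hf'.differentiableAt hmem).hasDerivAt.mul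
            ((hg'.differentiableAt hmem).hasDerivAt)).const_mul (2:ℂ)))).add
        ((hf.differentiableAt hmem).hasDerivAt.mul
          ((hg''.differentiableAt hmem).hasDerivAt))
      exact this.congr_deriv (by ring)
    exact H.deriv
  have R1 := hfsol z hz
  have R2 := hgsol z hz
  have R3 := deriv_of_sol U hU a₂ a₁ a₀ f ha₂ ha₁ ha₀ hf hf' hf'' hfsol z hz
  have R4 := deriv_of_sol U hU a₂ a₁ a₀ g ha₂ ha₁ ha₀ hg hg' hg'' hgsol z hz
  rw [e3, e2 z hz, e1 z hz]
  linear_combination (a₂ z * g z) * R3 + (a₂ z * f z) * R4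
    + (3 * a₂ z * deriv g z + (2 * a₁ z - deriv a₂ z) * g z) * R1
    + (3 * a₂ z * deriv f z + (2 * a₁ z - deriv a₂ z) * f z) * R2
end

section
/- Let α₁, α₂, β₁, β₂ be nonzero complex numbers with α₁·α₂ = −β₁·β₂. Then α₁² + α₂² = β₁² + β₂² if and only if the sets {α₁, α₂} and {β₁, β₂} have a common element. -/
/-- For nonzero complex numbers with `α₁·α₂ = −β₁·β₂`, one has
`α₁² + α₂² = β₁² + β₂²` iff `{α₁, α₂}` and `{β₁, β₂}` share an element. -/
theorem sum_sq_eq_iff_common_eigenvalue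
    (α₁ α₂ β₁ β₂ : ℂ) (hα₁ : α₁ ≠ 0) (hα₂ : α₂ ≠ 0) (hβ₁ : β₁ ≠ 0) (hβ₂ : β₂ ≠ 0)
    (hdet : α₁ * α₂ = -(β₁ * β₂)) :
    α₁ ^ 2 + α₂ ^ 2 = β₁ ^ 2 + β₂ ^ 2 ↔
      ∃ x : ℂ, x ∈ ({α₁, α₂} : Set ℂ) ∧ x ∈ ({β₁, β₂} : Set ℂ) := by
  constructor
  · intro h
    have key : (α₁ + α₂ - (β₁ - β₂)) * (α₁ + α₂ + (β₁ - β₂)) = 0 := by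
      linear_combination h + 2 * hdet
    rcases mul_eq_zero.mp key with h1 | h1
    · have hs : α₁ + α₂ = β₁ - β₂ := by linear_combination h1
      have key2 : (α₁ - β₁) * (α₁ + β₂) = 0 := by linear_combination α₁ * hs - hdet
      rcases mul_eq_zero.mp key2 with h2 | h2
      · exact ⟨α₁, Or.inl rfl, Or.inl (sub_eq_zero.mp h2)⟩
      · have : α₂ = β₁ := by linear_combination hs - h2
        exact ⟨α₂, Or.inr rfl, Or.inl this⟩
    · have hs : α₁ + α₂ = β₂ - β₁ := by linear_combination h1
      have key2 : (α₁ - β₂) * (α₁ + β₁) = 0 := by linear_combination α₁ * hs - hdet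
      rcases mul_eq_zero.mp key2 with h2 | h2
      · exact ⟨α₁, Or.inl rfl, Or.inr (sub_eq_zero.mp h2)⟩
      · have : α₂ = β₂ := by linear_combination hs - h2
        exact ⟨α₂, Or.inr rfl, Or.inr this⟩
  · rintro ⟨x, hx, hy⟩
    simp only [Set.mem_insert_iff, Set.mem_singleton_iff] at hx hy
    rcases hx with rfl | rfl <;> rcases hy with h | h
    · have h2 : β₁ * α₂ = β₁ * (-β₂) := by linear_combination hdet - α₂ * h
      have h3 := mul_left_cancel₀ hβ₁ h2
      rw [h, h3]; ring
    · have h2 : β₂ * α₂ = β₂ * (-β₁) := by linear_combination hdet - α₂ * h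
      have h3 := mul_left_cancel₀ hβ₂ h2
      rw [h, h3]; ring
    · have h2 : β₁ * α₁ = β₁ * (-β₂) := by linear_combination hdet - α₁ * h
      have h3 := mul_left_cancel₀ hβ₁ h2
      rw [h, h3]; ring
    · have h2 : β₂ * α₁ = β₂ * (-β₁) := by linear_combination hdet - α₁ * h
      have h3 := mul_left_cancel₀ hβ₂ h2
      rw [h, h3]; ring
end

section
/- Levelt's rigidity theorem: let A, B ∈ GL(n,ℂ) be such that no eigenvalue of A is an eigenvalue of B, and such that A·B⁻¹ is a pseudo-reflection, i.e. the matrix A·B⁻¹ − I has rank 1. If A' is conjugate to A, B' is conjugate to B, and A'·B'⁻¹ is conjugate to A·B⁻¹ (all conjugations in GL(n,ℂ)), then there is a single P ∈ GL(n,ℂ) with A' = P·A·P⁻¹ and B' = P·B·P⁻¹. -/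
open Matrix Polynomial

namespace LeveltAux

variable {m : ℕ}


/-- shifted companion-type matrix attached to a polynomial. -/
noncomputable def compN (m : ℕ) (f : ℂ[X]) : Matrix (Fin (m+1)) (Fin (m+1)) ℂ :=
  (Matrix.of fun k l : Fin (m+1) => if (k : ℕ) + 1 = (l : ℕ) then (1:ℂ) else 0)
    - vecMulVec (Pi.single (Fin.last m) 1) (fun j : Fin (m+1) => f.coeff (j : ℕ))

/-- iterated divX coefficient -/
lemma coeff_iterate_divX (p : ℂ[X]) (k j : ℕ) :
    (Polynomial.divX^[k] p).coeff j = p.coeff (j + k) := by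
  induction k generalizing j with
  | zero => simp
  | succ k ih =>
    rw [Function.iterate_succ_apply', Polynomial.coeff_divX, ih]
    ring_nf

/-- the row vector ρ. -/
noncomputable def rho (m : ℕ) (f : ℂ[X]) : Fin (m+1) → ℂ[X] :=
  fun l => Polynomial.divX^[(l : ℕ) + 1] f

lemma rho_last (f : ℂ[X]) (hf : f.Monic) (hdeg : f.natDegree = m + 1) :
    rho m f (Fin.last m) = 1 := by
  ext j
  rw [rho, coeff_iterate_divX]
  simp only [Fin.val_last, Polynomial.coeff_one]
  rcases j with _ | j
  · simpa [hdeg] using hf.coeff_natDegree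
  · rw [if_neg (by omega)]
    exact Polynomial.coeff_eq_zero_of_natDegree_lt (by omega)

lemma rho_rec (f : ℂ[X]) (i : Fin m) :
    rho m f i.castSucc = X * rho m f i.succ + C (f.coeff ((i : ℕ) + 1)) := by
  have h1 : rho m f i.succ = Polynomial.divX (rho m f i.castSucc) := by
    simp only [rho, Fin.val_succ, Fin.coe_castSucc]
    rw [← Function.iterate_succ_apply' Polynomial.divX]
  have h2 : (rho m f i.castSucc).coeff 0 = f.coeff ((i : ℕ) + 1) := by
    rw [rho, coeff_iterate_divX]; norm_num
  rw [h1, ← h2, X_mul_divX_add]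

/-- key identity: ρ ᵥ* charmatrix (compN m f) = f • e₀ -/
lemma rho_vecMul (f : ℂ[X]) (hf : f.Monic) (hdeg : f.natDegree = m + 1) :
    rho m f ᵥ* charmatrix (compN m f) = Pi.single (0 : Fin (m+1)) f := by
  funext j
  have hcm : ∀ l, charmatrix (compN m f) l j
      = (if l = j then (X:ℂ[X]) else 0) - C (compN m f l j) := by
    intro l
    rw [charmatrix_apply, Matrix.diagonal_apply]
  have hsum : (rho m f ᵥ* charmatrix (compN m f)) j
      = rho m f j * X - ∑ l, rho m f l * C (compN m f l j) := by
    simp only [Matrix.vecMul, dotProduct, hcm, mul_sub, Finset.sum_sub_distrib]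
    congr 1
    rw [Finset.sum_eq_single j]
    · simp
    · intro l _ hl; simp [hl]
    · simp
  have hN : ∀ l, compN m f l j
      = (if (l : ℕ) + 1 = (j : ℕ) then (1:ℂ) else 0) - (Pi.single (Fin.last m) (1:ℂ) : Fin (m+1) → ℂ) l * f.coeff (j:ℕ) := by
    intro l; rfl
  have hsplit : ∑ l, rho m f l * C (compN m f l j)
      = (∑ l, rho m f l * (if (l : ℕ) + 1 = (j : ℕ) then (1:ℂ[X]) else 0)) - C (f.coeff (j:ℕ)) := by
    simp only [hN, map_sub, _root_.map_mul, mul_sub]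
    rw [Finset.sum_sub_distrib]
    congr 1
    · congr 1; funext l; congr 1; split <;> simp
    · rw [Finset.sum_eq_single (Fin.last m)]
      · rw [rho_last f hf hdeg]; simp
      · intro l _ hl; simp [Pi.single_apply, hl]
      · simp
  rw [hsum, hsplit]
  -- now case on j
  induction j using Fin.cases with
  | zero =>
    have : (∑ l, rho m f l * (if (l : ℕ) + 1 = ((0 : Fin (m+1)) : ℕ) then (1:ℂ[X]) else 0)) = 0 := by
      apply Finset.sum_eq_zero; intro l _; simp
    rw [this]
    have h0 : rho m f 0 = Polynomial.divX f := by simp [rho]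
    simp only [Pi.single_eq_same, sub_zero, h0]
    rw [mul_comm]
    conv_rhs => rw [← X_mul_divX_add f]
    norm_num
  | succ i =>
    have : (∑ l, rho m f l * (if (l : ℕ) + 1 = ((i.succ : Fin (m+1)) : ℕ) then (1:ℂ[X]) else 0))
        = rho m f i.castSucc := by
      rw [Finset.sum_eq_single i.castSucc]
      · simp
      · intro l _ hl
        rw [if_neg, mul_zero]
        intro hc
        apply hl
        have : (l : ℕ) = (i.castSucc : ℕ) := by simpa using hc
        exact Fin.ext this
      · simp
    rw [this, rho_rec f i]
    have h0 : (Pi.single (0 : Fin (m+1)) f : Fin (m+1) → ℂ[X]) i.succ = 0 := by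
      simp [Pi.single_apply, (Fin.succ_ne_zero i)]
    rw [h0]
    simp only [Fin.val_succ]
    ring

set_option maxHeartbeats 1000000 in
/-- charpoly of rank-one column-0 perturbation of compN. -/
theorem charpoly_compN_sub (f : ℂ[X]) (hf : f.Monic) (hdeg : f.natDegree = m + 1)
    (hfc : (compN m f).charpoly = f) (v : Fin (m+1) → ℂ) :
    (compN m f - vecMulVec v (Pi.single 0 1)).charpoly
      = f + ∑ l, rho m f l * C (v l) := by
  classical
  set N := compN m f with hN
  set Y := charmatrix N with hY
  set e0P : Fin (m+1) → ℂ[X] := Pi.single 0 1 with he0P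
  -- charmatrix of the perturbation
  have hmat : charmatrix (N - vecMulVec v (Pi.single 0 1))
      = Y + vecMulVec (fun l => C (v l)) e0P := by
    have h1 : (C : ℂ →+* ℂ[X]).mapMatrix (N - vecMulVec v (Pi.single 0 1))
        = (C : ℂ →+* ℂ[X]).mapMatrix N
          - vecMulVec (fun l => C (v l)) e0P := by
      rw [map_sub]
      congr 1
      ext i j
      simp only [RingHom.mapMatrix_apply, Matrix.map_apply, vecMulVec_apply, _root_.map_mul,
        he0P]
      congr 1
      simp [Pi.single_apply, apply_ite C]
    show Matrix.scalar _ X - _ = _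
    rw [h1]
    show _ = Matrix.scalar _ X - _ + _
    abel
  -- move to the fraction field
  set K := FractionRing ℂ[X]
  set φ := algebraMap ℂ[X] K with hφdef
  have hφ : Function.Injective φ := IsFractionRing.injective ℂ[X] K
  apply hφ
  have hf0 : φ f ≠ 0 := by
    intro h
    exact hf.ne_zero (hφ (by simpa using h))
  set Φ : Matrix (Fin (m+1)) (Fin (m+1)) ℂ[X] →+* Matrix (Fin (m+1)) (Fin (m+1)) K :=
    (φ : ℂ[X] →+* K).mapMatrix with hΦdef
  set e0K : Fin (m+1) → K := Pi.single 0 1 with he0K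
  set a : Fin (m+1) → K := fun l => φ (C (v l)) with ha
  have hdet : (Φ Y).det = φ f := by
    rw [hΦdef, ← RingHom.map_det]
    exact congrArg φ hfc
  have hdetu : IsUnit (Φ Y).det := by rw [hdet]; exact isUnit_iff_ne_zero.mpr hf0
  -- the mapped rho identity
  have hrho : (fun l => φ (rho m f l)) ᵥ* (Φ Y) = Pi.single (0 : Fin (m+1)) (φ f) := by
    funext j
    have h2 := congrFun (rho_vecMul f hf hdeg) j
    simp only [Matrix.vecMul, dotProduct] at h2 ⊢
    calc ∑ l, φ (rho m f l) * (Φ Y) l j = φ (∑ l, rho m f l * Y l j) := by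
          rw [map_sum]; congr 1; funext l; rw [_root_.map_mul]; rfl
      _ = φ ((Pi.single (0 : Fin (m+1)) f : Fin (m+1) → ℂ[X]) j) := by rw [h2]
      _ = (Pi.single (0 : Fin (m+1)) (φ f) : Fin (m+1) → K) j := by
          rw [Pi.single_apply, Pi.single_apply, apply_ite φ, map_zero]
  -- e0 row of the inverse
  have hinv : e0K ᵥ* (Φ Y)⁻¹ = (φ f)⁻¹ • fun l => φ (rho m f l) := by
    have h1 : (fun l => φ (rho m f l)) ᵥ* ((Φ Y) * (Φ Y)⁻¹) = fun l => φ (rho m f l) := by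
      rw [Matrix.mul_nonsing_inv _ hdetu, Matrix.vecMul_one]
    rw [← Matrix.vecMul_vecMul, hrho] at h1
    have h2 : (Pi.single (0 : Fin (m+1)) (φ f) : Fin (m+1) → K) = (φ f) • e0K := by
      funext j
      simp only [Pi.smul_apply, he0K, Pi.single_apply, smul_eq_mul]
      split <;> simp
    rw [h2, Matrix.smul_vecMul] at h1
    rw [← h1, smul_smul, inv_mul_cancel₀ hf0, one_smul]
  -- determinant lemma
  have hmap : Φ (charmatrix (N - vecMulVec v (Pi.single 0 1)))
      = Φ Y + replicateCol Unit a * replicateRow Unit e0K := by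
    rw [hmat, map_add]
    congr 1
    rw [← vecMulVec_eq]
    ext i j
    simp only [hΦdef, RingHom.mapMatrix_apply, Matrix.map_apply, vecMulVec_apply,
      _root_.map_mul, ha, he0K, he0P]
    congr 1
    rw [Pi.single_apply, Pi.single_apply, apply_ite φ, map_zero, _root_.map_one]
  have hcp : φ ((N - vecMulVec v (Pi.single 0 1)).charpoly)
      = (Φ Y + replicateCol Unit a * replicateRow Unit e0K).det := by
    have hdc : φ ((N - vecMulVec v (Pi.single 0 1)).charpoly)
        = (Φ (charmatrix (N - vecMulVec v (Pi.single 0 1)))).det := by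
      rw [hΦdef]
      exact RingHom.map_det φ _
    rw [hdc, hmap]
  rw [hcp, Matrix.det_add_replicateCol_mul_replicateRow hdetu]
  have hfin : (1 + replicateRow Unit e0K * (Φ Y)⁻¹ * replicateCol Unit a).det
      = 1 + (φ f)⁻¹ * ∑ l, φ (rho m f l * C (v l)) := by
    rw [Matrix.det_unique]
    simp only [Matrix.add_apply, Matrix.one_apply_eq]
    congr 1
    rw [← Matrix.replicateRow_vecMul, hinv, Matrix.replicateRow_mul_replicateCol_apply]
    simp [dotProduct, Finset.mul_sum, _root_.map_mul, ha, mul_assoc]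
  rw [hfin, hdet]
  rw [map_add, map_sum]
  rw [mul_add, mul_one, ← mul_assoc, mul_inv_cancel₀ hf0, one_mul]

lemma rho_sum_eq_zero (f : ℂ[X]) (hf : f.Monic) (hdeg : f.natDegree = m + 1)
    (d : Fin (m+1) → ℂ) (h : ∑ l, rho m f l * C (d l) = 0) : d = 0 := by
  have hco : ∀ k : Fin (m+1), ∑ l : Fin (m+1), f.coeff ((m - (k:ℕ)) + (l:ℕ) + 1) * d l = 0 := by
    intro k
    have h1 := congrArg (fun p => Polynomial.coeff p (m - (k : ℕ))) h
    simp only [Polynomial.finset_sum_coeff, Polynomial.coeff_mul_C, Polynomial.coeff_zero] at h1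
    rw [← h1]
    congr 1
    funext l
    rw [rho, coeff_iterate_divX f]
    ring_nf
  have key : ∀ M : ℕ, ∀ k : Fin (m+1), (k : ℕ) = M → d k = 0 := by
    intro M
    induction M using Nat.strong_induction_on with
    | _ M IH =>
      intro k hk
      have hkm : (k : ℕ) ≤ m := Nat.lt_succ_iff.mp k.isLt
      have h2 : ∑ l : Fin (m+1), f.coeff ((m - (k:ℕ)) + (l:ℕ) + 1) * d l = d k := by
        rw [Finset.sum_eq_single k]
        · have : (m - (k:ℕ)) + (k:ℕ) + 1 = m + 1 := by omega
          rw [this, ← hdeg, hf.coeff_natDegree, one_mul]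
        · intro l _ hl
          rcases lt_or_gt_of_ne (fun hc => hl (Fin.ext hc)) with hlt | hgt
          · rw [IH (l : ℕ) (by omega) l rfl, mul_zero]
          · rw [Polynomial.coeff_eq_zero_of_natDegree_lt, zero_mul]
            rw [hdeg]; omega
        · intro hc; exact absurd (Finset.mem_univ k) hc
      rw [← h2, hco k]
  funext k
  exact key (k : ℕ) k rfl

/-- Cayley–Hamilton in power form. -/
lemma pow_card_eq (A : Matrix (Fin (m+1)) (Fin (m+1)) ℂ) :
    A ^ (m+1) = -∑ i ∈ Finset.range (m+1), A.charpoly.coeff i • A ^ i := by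
  have h0 := Matrix.aeval_self_charpoly A
  rw [aeval_eq_sum_range] at h0
  have hdeg : A.charpoly.natDegree = m + 1 := by
    simp [Matrix.charpoly_natDegree_eq_dim]
  rw [hdeg, Finset.sum_range_succ] at h0
  have hlead : A.charpoly.coeff (m+1) = 1 := by
    have := (Matrix.charpoly_monic A).coeff_natDegree
    rwa [hdeg] at this
  rw [hlead, one_smul] at h0
  have := eq_neg_of_add_eq_zero_right h0
  rw [← this]

/-- The S-matrix construction: cyclicity and intertwining relations. -/
theorem exists_S (A B : Matrix (Fin (m+1)) (Fin (m+1)) ℂ)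
    (hdisj : ∀ μ : ℂ, ¬((A - μ • (1 : Matrix (Fin (m+1)) (Fin (m+1)) ℂ)).det = 0 ∧
      (B - μ • (1 : Matrix (Fin (m+1)) (Fin (m+1)) ℂ)).det = 0))
    (u w : Fin (m+1) → ℂ) (hfac : A - B = vecMulVec u w) :
    ∃ S : Matrix (Fin (m+1)) (Fin (m+1)) ℂ, IsUnit S ∧
      S * A = compN m A.charpoly * S ∧
      S * B = (compN m A.charpoly - vecMulVec (S *ᵥ u) (Pi.single 0 1)) * S := by
  classical
  set S : Matrix (Fin (m+1)) (Fin (m+1)) ℂ :=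
    Matrix.of (fun k j : Fin (m+1) => (w ᵥ* A ^ (k : ℕ)) j) with hS
  have hSapp : ∀ k : Fin (m+1), ∀ j, S k j = (w ᵥ* A ^ (k : ℕ)) j := fun _ _ => rfl
  -- Step 1 : S is invertible
  have hits : IsUnit S := by
    rw [Matrix.isUnit_iff_isUnit_det, isUnit_iff_ne_zero]
    intro hdet
    obtain ⟨x, hx0, hxS⟩ := Matrix.exists_mulVec_eq_zero_iff.mpr hdet
    -- x is annihilated by w A^k for all k < m+1; extend to all k by Cayley–Hamilton
    have hlow : ∀ k : Fin (m+1), w ⬝ᵥ (A ^ (k : ℕ) *ᵥ x) = 0 := by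
      intro k
      have := congrFun hxS k
      simp only [Matrix.mulVec, dotProduct, Pi.zero_apply] at this
      rw [Matrix.dotProduct_mulVec]
      simpa [Matrix.vecMul, dotProduct, Matrix.mulVec, hSapp] using this
    have hall : ∀ k : ℕ, w ⬝ᵥ (A ^ k *ᵥ x) = 0 := by
      intro k
      induction k using Nat.strong_induction_on with
      | _ k IH =>
        by_cases hk : k < m + 1
        · exact hlow ⟨k, hk⟩
        · push_neg at hk
          have hsplit : A ^ k = A ^ (m+1) * A ^ (k - (m+1)) := by
            rw [← pow_add]
            congr 1
            omega
          have hsum : ∀ (T : Finset ℕ) (M : ℕ → Matrix (Fin (m+1)) (Fin (m+1)) ℂ),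
              (∑ i ∈ T, M i) *ᵥ x = ∑ i ∈ T, M i *ᵥ x := by
            intro T M
            induction T using Finset.induction_on with
            | empty => simp
            | insert _ _ hnotmem ih =>
              rw [Finset.sum_insert hnotmem, Finset.sum_insert hnotmem,
                Matrix.add_mulVec, ih]
          rw [hsplit, pow_card_eq A, Matrix.neg_mul, Finset.sum_mul, Matrix.neg_mulVec,
            dotProduct_neg, hsum]
          have hds : ∀ (T : Finset ℕ) (v : ℕ → Fin (m+1) → ℂ),
              w ⬝ᵥ (∑ i ∈ T, v i) = ∑ i ∈ T, w ⬝ᵥ v i := by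
            intro T v
            induction T using Finset.induction_on with
            | empty => simp
            | insert _ _ hnotmem ih =>
              rw [Finset.sum_insert hnotmem, Finset.sum_insert hnotmem, dotProduct_add, ih]
          rw [hds]
          rw [Finset.sum_eq_zero, neg_zero]
          intro i hi
          rw [smul_mul_assoc, ← pow_add, Matrix.smul_mulVec, dotProduct_smul]
          rw [IH (i + (k - (m+1))) (by simp at hi; omega), smul_zero]
    -- the submodule V₀
    set V : Submodule ℂ (Fin (m+1) → ℂ) :=
      { carrier := {y | ∀ k : ℕ, w ⬝ᵥ (A ^ k *ᵥ y) = 0}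
        add_mem' := by
          intro a b ha hb k
          rw [Matrix.mulVec_add, dotProduct_add, ha k, hb k, add_zero]
        zero_mem' := by
          intro k
          rw [Matrix.mulVec_zero, dotProduct_zero]
        smul_mem' := by
          intro c a ha k
          rw [Matrix.mulVec_smul, dotProduct_smul, ha k, smul_zero] } with hV
    have hxV : x ∈ V := hall
    have hVinv : ∀ y ∈ V, A.mulVecLin y ∈ V := by
      intro y hy k
      simp only [Matrix.mulVecLin_apply]
      rw [Matrix.mulVec_mulVec, ← pow_succ]
      exact hy (k + 1)
    haveI : Nontrivial V := Submodule.nontrivial_iff_ne_bot.mpr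
      (fun hbot => hx0 (by simpa [hbot] using hxV))
    obtain ⟨μ, hμ⟩ := Module.End.exists_eigenvalue (A.mulVecLin.restrict hVinv)
    obtain ⟨y, hy⟩ := hμ.exists_hasEigenvector
    have hyA : A *ᵥ (y : Fin (m+1) → ℂ) = μ • (y : Fin (m+1) → ℂ) := by
      have := hy.apply_eq_smul
      have := congrArg (Subtype.val) this
      simpa [LinearMap.restrict_apply] using this
    have hy0 : (y : Fin (m+1) → ℂ) ≠ 0 := by
      intro hc
      exact hy.right (by ext : 1; exact hc)
    have hwy : w ⬝ᵥ (y : Fin (m+1) → ℂ) = 0 := by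
      have := y.2 0
      simpa using this
    have hyB : B *ᵥ (y : Fin (m+1) → ℂ) = μ • (y : Fin (m+1) → ℂ) := by
      have hAB : (A - B) *ᵥ (y : Fin (m+1) → ℂ) = 0 := by
        rw [hfac]
        funext i
        simp only [Matrix.mulVec, dotProduct, vecMulVec_apply, Pi.zero_apply]
        calc ∑ j, u i * w j * (y : Fin (m+1) → ℂ) j
            = u i * (w ⬝ᵥ (y : Fin (m+1) → ℂ)) := by
              rw [dotProduct, Finset.mul_sum]; congr 1; funext j; ring
          _ = 0 := by rw [hwy, mul_zero]
      rw [Matrix.sub_mulVec] at hAB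
      rw [← hyA]
      linear_combination (norm := module) -hAB
    refine hdisj μ ⟨?_, ?_⟩
    · rw [← Matrix.exists_mulVec_eq_zero_iff]
      refine ⟨y, hy0, ?_⟩
      rw [Matrix.sub_mulVec, Matrix.smul_mulVec, Matrix.one_mulVec, hyA, sub_self]
    · rw [← Matrix.exists_mulVec_eq_zero_iff]
      refine ⟨y, hy0, ?_⟩
      rw [Matrix.sub_mulVec, Matrix.smul_mulVec, Matrix.one_mulVec, hyB, sub_self]
  -- Step 2 : S * A = compN * S
  have hrow : ∀ k : Fin (m+1), ∀ j, (S * A) k j = (w ᵥ* A ^ ((k:ℕ)+1)) j := by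
    intro k j
    have hstep : (w ᵥ* A ^ ((k:ℕ)+1)) j = ((w ᵥ* A ^ (k:ℕ)) ᵥ* A) j := by
      rw [Matrix.vecMul_vecMul, ← pow_succ]
    rw [hstep, Matrix.mul_apply]
    simp only [Matrix.vecMul, dotProduct, hSapp]
  have hSA : S * A = compN m A.charpoly * S := by
    ext k j
    rw [hrow k j, Matrix.mul_apply]
    have hcompapp : ∀ l, compN m A.charpoly k l
        = (if (k : ℕ) + 1 = (l : ℕ) then (1:ℂ) else 0)
          - (Pi.single (Fin.last m) (1:ℂ) : Fin (m+1) → ℂ) k * A.charpoly.coeff (l : ℕ) := by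
      intro l; rfl
    simp only [hcompapp, sub_mul]
    rw [Finset.sum_sub_distrib]
    induction k using Fin.lastCases with
    | cast i =>
      have hky : (Pi.single (Fin.last m) (1:ℂ) : Fin (m+1) → ℂ) i.castSucc = 0 := by
        rw [Pi.single_apply, if_neg]
        exact Fin.ne_of_lt (Fin.castSucc_lt_last i)
      have h1 : ∑ l : Fin (m+1), (if (i.castSucc : ℕ) + 1 = (l : ℕ) then (1:ℂ) else 0) * S l j
          = S i.succ j := by
        rw [Finset.sum_eq_single i.succ]
        · simp
        · intro l _ hl
          rw [if_neg, zero_mul]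
          intro hc
          exact hl (Fin.ext (by simpa using hc.symm))
        · simp
      rw [h1]
      simp only [hky, zero_mul, Finset.sum_const_zero, sub_zero]
      rw [hSapp]
      simp
    | last =>
      have hz : ∑ l : Fin (m+1), (if ((Fin.last m : Fin (m+1)) : ℕ) + 1 = (l:ℕ) then (1:ℂ) else 0) * S l j = 0 := by
        apply Finset.sum_eq_zero
        intro l _
        rw [if_neg, zero_mul]
        have := l.isLt
        simp only [Fin.val_last]
        omega
      rw [hz]
      simp only [Pi.single_eq_same, one_mul, Fin.val_last, zero_sub]
      have hvm : ∀ (T : Finset ℕ) (M : ℕ → Matrix (Fin (m+1)) (Fin (m+1)) ℂ),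
          w ᵥ* (∑ t ∈ T, M t) = ∑ t ∈ T, w ᵥ* M t := by
        intro T M
        induction T using Finset.induction_on with
        | empty => simp [Matrix.vecMul_zero]
        | insert _ _ hnotmem ih =>
          rw [Finset.sum_insert hnotmem, Finset.sum_insert hnotmem, Matrix.vecMul_add, ih]
      have hsm : ∀ (c : ℂ) (M : Matrix (Fin (m+1)) (Fin (m+1)) ℂ),
          w ᵥ* (c • M) = c • (w ᵥ* M) := by
        intro c M
        funext j'
        simp only [Matrix.vecMul, dotProduct, Matrix.smul_apply, Pi.smul_apply, smul_eq_mul,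
          Finset.mul_sum]
        apply Finset.sum_congr rfl
        intro i _
        ring
      rw [pow_card_eq A, Matrix.vecMul_neg, hvm]
      calc (-(∑ t ∈ Finset.range (m+1), w ᵥ* (A.charpoly.coeff t • A ^ t))) j
          = -∑ t ∈ Finset.range (m+1), A.charpoly.coeff t * (w ᵥ* A ^ t) j := by
            rw [Pi.neg_apply, Finset.sum_apply]
            congr 1
            apply Finset.sum_congr rfl
            intro t _
            rw [hsm]
            rfl
        _ = -∑ l : Fin (m+1), A.charpoly.coeff (l:ℕ) * (w ᵥ* A ^ (l:ℕ)) j := by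
            rw [Fin.sum_univ_eq_sum_range (fun t => A.charpoly.coeff t * (w ᵥ* A ^ t) j) (m+1)]
        _ = -∑ l : Fin (m+1), A.charpoly.coeff (l:ℕ) * S l j := rfl
  -- Step 3 : S * B
  refine ⟨S, hits, hSA, ?_⟩
  have h2 : S * vecMulVec u w = vecMulVec (S *ᵥ u) w := by
    ext k j
    simp only [Matrix.mul_apply, vecMulVec_apply, Matrix.mulVec, dotProduct]
    rw [Finset.sum_mul]
    apply Finset.sum_congr rfl
    intro l _
    ring
  have h3 : vecMulVec (S *ᵥ u) (Pi.single 0 1) * S = vecMulVec (S *ᵥ u) w := by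
    ext k j
    simp only [Matrix.mul_apply, vecMulVec_apply]
    rw [Finset.sum_eq_single (0 : Fin (m+1))]
    · rw [Pi.single_eq_same, mul_one, hSapp]
      simp
    · intro l _ hl
      rw [Pi.single_apply, if_neg hl, mul_zero, zero_mul]
    · intro hc; exact absurd (Finset.mem_univ _) hc
  have h4 : S * B = S * A - S * vecMulVec u w := by
    rw [← hfac, Matrix.mul_sub]
    abel
  rw [h4, h2, Matrix.sub_mul, hSA, h3]




lemma charpoly_conj' {n : ℕ} (A Q : Matrix (Fin n) (Fin n) ℂ) (hQ : IsUnit Q) :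
    (Q * A * Q⁻¹).charpoly = A.charpoly := by
  have hQd : IsUnit Q.det := (Matrix.isUnit_iff_isUnit_det Q).mp hQ
  have hQQ : Q * Q⁻¹ = 1 := Matrix.mul_nonsing_inv Q hQd
  set φ : Matrix (Fin n) (Fin n) ℂ →+* Matrix (Fin n) (Fin n) ℂ[X] :=
    (C : ℂ →+* ℂ[X]).mapMatrix with hφ
  have hφQQ : φ Q * φ Q⁻¹ = 1 := by rw [← _root_.map_mul, hQQ, _root_.map_one]
  have hcomm : ∀ M : Matrix (Fin n) (Fin n) ℂ[X],
      Commute (Matrix.scalar (Fin n) (X : ℂ[X])) M :=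
    fun M => Matrix.scalar_commute (X : ℂ[X]) (fun r' => Commute.all _ _) M
  have hcm : charmatrix (Q * A * Q⁻¹) = φ Q * charmatrix A * φ Q⁻¹ := by
    show Matrix.scalar _ X - φ (Q * A * Q⁻¹) = φ Q * (Matrix.scalar _ X - φ A) * φ Q⁻¹
    rw [Matrix.mul_sub, Matrix.sub_mul, _root_.map_mul, _root_.map_mul]
    congr 1
    rw [← (hcomm (φ Q)).eq, Matrix.mul_assoc, hφQQ, Matrix.mul_one]
  have : (Q * A * Q⁻¹).charpoly = (φ Q * charmatrix A * φ Q⁻¹).det := by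
    rw [Matrix.charpoly, hcm]
  rw [this, Matrix.det_mul, Matrix.det_mul, Matrix.charpoly]
  have hdet1 : (φ Q).det * (φ Q⁻¹).det = 1 := by
    rw [← Matrix.det_mul, hφQQ, Matrix.det_one]
  calc (φ Q).det * (charmatrix A).det * (φ Q⁻¹).det
      = (charmatrix A).det * ((φ Q).det * (φ Q⁻¹).det) := by ring
    _ = (charmatrix A).det := by rw [hdet1, mul_one]

lemma rank_le_one_factor {n : ℕ} (M : Matrix (Fin n) (Fin n) ℂ) (h : M.rank ≤ 1) :
    ∃ u w : Fin n → ℂ, M = vecMulVec u w := by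
  have h' : Module.finrank ℂ (LinearMap.range M.mulVecLin) ≤ 1 := h
  obtain ⟨v₀, hv₀⟩ := finrank_le_one_iff.mp h'
  choose c hc using fun j : Fin n =>
    hv₀ ⟨M *ᵥ Pi.single j 1, LinearMap.mem_range.mpr ⟨Pi.single j 1, rfl⟩⟩
  refine ⟨v₀, c, ?_⟩
  ext i j
  have h1 : c j • (v₀ : Fin n → ℂ) = M *ᵥ Pi.single j 1 := by
    have := congrArg (Subtype.val) (hc j)
    simpa using this
  have h2 := congrFun h1 i
  simp only [Pi.smul_apply, smul_eq_mul] at h2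
  rw [vecMulVec_apply, mul_comm, h2]
  simp [Matrix.mulVec_single]


end LeveltAux

open LeveltAux in
/-- Levelt's rigidity theorem: if `A`, `B` have disjoint spectra and `A·B⁻¹` is a
pseudo-reflection, then any triple `(A', B', A'·B'⁻¹)` conjugate componentwise to
`(A, B, A·B⁻¹)` is simultaneously conjugate to `(A, B)`. -/
theorem levelt_rigidity (n : ℕ)
    (A B A' B' : Matrix (Fin n) (Fin n) ℂ)
    (hA : IsUnit A) (hB : IsUnit B) (hA' : IsUnit A') (hB' : IsUnit B')
    (hdisj : ∀ μ : ℂ, ¬((A - μ • (1 : Matrix (Fin n) (Fin n) ℂ)).det = 0 ∧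
      (B - μ • (1 : Matrix (Fin n) (Fin n) ℂ)).det = 0))
    (hpseudo : (A * B⁻¹ - 1).rank = 1)
    (hconjA : ∃ Q : Matrix (Fin n) (Fin n) ℂ, IsUnit Q ∧ A' = Q * A * Q⁻¹)
    (hconjB : ∃ Q : Matrix (Fin n) (Fin n) ℂ, IsUnit Q ∧ B' = Q * B * Q⁻¹)
    (hconjAB : ∃ Q : Matrix (Fin n) (Fin n) ℂ, IsUnit Q ∧
      A' * B'⁻¹ = Q * (A * B⁻¹) * Q⁻¹) :
    ∃ P : Matrix (Fin n) (Fin n) ℂ, IsUnit P ∧ A' = P * A * P⁻¹ ∧ B' = P * B * P⁻¹ := by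
  rcases Nat.eq_zero_or_pos n with hn0 | hnpos
  · exfalso
    subst hn0
    have h0 := Matrix.rank_le_card_width (A * B⁻¹ - 1)
    rw [hpseudo] at h0
    simp at h0
  obtain ⟨m, rfl⟩ : ∃ m, n = m + 1 := ⟨n - 1, by omega⟩
  obtain ⟨Q1, hQ1, hA'e⟩ := hconjA
  obtain ⟨Q2, hQ2, hB'e⟩ := hconjB
  obtain ⟨Q3, hQ3, hABe⟩ := hconjAB
  have hQ1d := (Matrix.isUnit_iff_isUnit_det _).mp hQ1
  have hQ2d := (Matrix.isUnit_iff_isUnit_det _).mp hQ2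
  have hQ3d := (Matrix.isUnit_iff_isUnit_det _).mp hQ3
  have hBd := (Matrix.isUnit_iff_isUnit_det _).mp hB
  have hB'd := (Matrix.isUnit_iff_isUnit_det _).mp hB'
  -- rank facts
  have hr1 : (A - B).rank ≤ 1 := by
    have hfac1 : A - B = (A * B⁻¹ - 1) * B := by
      rw [Matrix.sub_mul, Matrix.mul_assoc, Matrix.nonsing_inv_mul B hBd, Matrix.mul_one,
        Matrix.one_mul]
    rw [hfac1]
    exact le_trans (Matrix.rank_mul_le_left _ _) (le_of_eq hpseudo)
  have hps' : (A' * B'⁻¹ - 1).rank ≤ 1 := by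
    have hconj1 : A' * B'⁻¹ - 1 = Q3 * (A * B⁻¹ - 1) * Q3⁻¹ := by
      rw [Matrix.mul_sub, Matrix.sub_mul, Matrix.mul_one, Matrix.mul_nonsing_inv Q3 hQ3d, hABe]
    rw [hconj1]
    calc (Q3 * (A * B⁻¹ - 1) * Q3⁻¹).rank ≤ (Q3 * (A * B⁻¹ - 1)).rank :=
          Matrix.rank_mul_le_left _ _
      _ ≤ (A * B⁻¹ - 1).rank := Matrix.rank_mul_le_right _ _
      _ ≤ 1 := le_of_eq hpseudo
  have hr1' : (A' - B').rank ≤ 1 := by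
    have hfac1 : A' - B' = (A' * B'⁻¹ - 1) * B' := by
      rw [Matrix.sub_mul, Matrix.mul_assoc, Matrix.nonsing_inv_mul B' hB'd, Matrix.mul_one,
        Matrix.one_mul]
    rw [hfac1]
    exact le_trans (Matrix.rank_mul_le_left _ _) hps'
  obtain ⟨u, w, hfac⟩ := rank_le_one_factor _ hr1
  obtain ⟨u', w', hfac'⟩ := rank_le_one_factor _ hr1'
  -- disjointness of spectra transfers to the primed pair
  have hsimdet : ∀ (X Q : Matrix (Fin (m+1)) (Fin (m+1)) ℂ) (hQ : IsUnit Q) (μ : ℂ),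
      (Q * X * Q⁻¹ - μ • 1).det = (X - μ • 1).det := by
    intro X Q hQ μ
    have hQd := (Matrix.isUnit_iff_isUnit_det _).mp hQ
    have hconj : Q * X * Q⁻¹ - μ • 1 = Q * (X - μ • 1) * Q⁻¹ := by
      rw [Matrix.mul_sub, Matrix.sub_mul]
      congr 1
      rw [Matrix.mul_smul, Matrix.mul_one, Matrix.smul_mul, Matrix.mul_nonsing_inv Q hQd]
    rw [hconj, Matrix.det_mul, Matrix.det_mul]
    have hdet1 : Q.det * Q⁻¹.det = 1 := by
      rw [← Matrix.det_mul, Matrix.mul_nonsing_inv Q hQd, Matrix.det_one]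
    calc Q.det * (X - μ • 1).det * Q⁻¹.det
        = (X - μ • 1).det * (Q.det * Q⁻¹.det) := by ring
      _ = (X - μ • 1).det := by rw [hdet1, mul_one]
  have hdisj' : ∀ μ : ℂ, ¬((A' - μ • (1 : Matrix (Fin (m+1)) (Fin (m+1)) ℂ)).det = 0 ∧
      (B' - μ • (1 : Matrix (Fin (m+1)) (Fin (m+1)) ℂ)).det = 0) := by
    intro μ hc
    apply hdisj μ
    constructor
    · have := hc.1
      rw [hA'e, hsimdet A Q1 hQ1 μ] at this
      exact this
    · have := hc.2
      rw [hB'e, hsimdet B Q2 hQ2 μ] at this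
      exact this
  -- the S-matrices
  obtain ⟨S, hS, hSA, hSB⟩ := exists_S A B hdisj u w hfac
  obtain ⟨S', hS', hSA', hSB'⟩ := exists_S A' B' hdisj' u' w' hfac'
  have hcpA : A'.charpoly = A.charpoly := by rw [hA'e]; exact charpoly_conj' A Q1 hQ1
  have hcpB : B'.charpoly = B.charpoly := by rw [hB'e]; exact charpoly_conj' B Q2 hQ2
  rw [hcpA] at hSA' hSB'
  have hSd := (Matrix.isUnit_iff_isUnit_det _).mp hS
  have hS'd := (Matrix.isUnit_iff_isUnit_det _).mp hS'
  set f := A.charpoly with hf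
  have hSS : S * S⁻¹ = 1 := Matrix.mul_nonsing_inv S hSd
  have hSS' : S' * S'⁻¹ = 1 := Matrix.mul_nonsing_inv S' hS'd
  have hSiS : S⁻¹ * S = 1 := Matrix.nonsing_inv_mul S hSd
  have hSiS' : S'⁻¹ * S' = 1 := Matrix.nonsing_inv_mul S' hS'd
  -- similarity normal forms
  have hNsim : compN m f = S * A * S⁻¹ := by
    rw [Matrix.mul_assoc]
    calc compN m f = compN m f * (S * S⁻¹) := by rw [hSS, Matrix.mul_one]
      _ = (compN m f * S) * S⁻¹ := by rw [Matrix.mul_assoc]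
      _ = (S * A) * S⁻¹ := by rw [hSA]
      _ = S * (A * S⁻¹) := by rw [Matrix.mul_assoc]
  have hMsim : compN m f - vecMulVec (S *ᵥ u) (Pi.single 0 1) = S * B * S⁻¹ := by
    calc compN m f - vecMulVec (S *ᵥ u) (Pi.single 0 1)
        = ((compN m f - vecMulVec (S *ᵥ u) (Pi.single 0 1)) * S) * S⁻¹ := by
          rw [Matrix.mul_assoc, hSS, Matrix.mul_one]
      _ = (S * B) * S⁻¹ := by rw [← hSB]
      _ = S * B * S⁻¹ := rfl
  have hN'sim : compN m f = S' * A' * S'⁻¹ := by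
    calc compN m f = (compN m f * S') * S'⁻¹ := by rw [Matrix.mul_assoc, hSS', Matrix.mul_one]
      _ = (S' * A') * S'⁻¹ := by rw [hSA']
  have hM'sim : compN m f - vecMulVec (S' *ᵥ u') (Pi.single 0 1) = S' * B' * S'⁻¹ := by
    calc compN m f - vecMulVec (S' *ᵥ u') (Pi.single 0 1)
        = ((compN m f - vecMulVec (S' *ᵥ u') (Pi.single 0 1)) * S') * S'⁻¹ := by
          rw [Matrix.mul_assoc, hSS', Matrix.mul_one]
      _ = (S' * B') * S'⁻¹ := by rw [← hSB']
  -- charpoly facts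
  have hmono : f.Monic := Matrix.charpoly_monic A
  have hdeg : f.natDegree = m + 1 := by simp [hf, Matrix.charpoly_natDegree_eq_dim]
  have hfc : (compN m f).charpoly = f := by
    rw [hNsim]
    exact charpoly_conj' A S hS
  have hcpM : (compN m f - vecMulVec (S *ᵥ u) (Pi.single 0 1)).charpoly = B.charpoly := by
    rw [hMsim]
    exact charpoly_conj' B S hS
  have hcpM' : (compN m f - vecMulVec (S' *ᵥ u') (Pi.single 0 1)).charpoly = B.charpoly := by
    rw [hM'sim, ← hcpB]
    exact charpoly_conj' B' S' hS'
  -- injectivity : the two perturbation vectors agree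
  have hvv : S *ᵥ u = S' *ᵥ u' := by
    have hsum : ∑ l, rho m f l * C ((S *ᵥ u) l) = ∑ l, rho m f l * C ((S' *ᵥ u') l) := by
      have hMM := hcpM.trans hcpM'.symm
      rw [charpoly_compN_sub f hmono hdeg hfc (S *ᵥ u),
        charpoly_compN_sub f hmono hdeg hfc (S' *ᵥ u')] at hMM
      exact add_left_cancel hMM
    have hzero : ∑ l, rho m f l * C (((S *ᵥ u) - (S' *ᵥ u')) l) = 0 := by
      have : ∀ l : Fin (m+1), rho m f l * C (((S *ᵥ u) - (S' *ᵥ u')) l)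
          = rho m f l * C ((S *ᵥ u) l) - rho m f l * C ((S' *ᵥ u') l) := by
        intro l
        rw [Pi.sub_apply, map_sub, mul_sub]
      rw [Finset.sum_congr rfl (fun l _ => this l), Finset.sum_sub_distrib, hsum, sub_self]
    have := rho_sum_eq_zero f hmono hdeg _ hzero
    exact sub_eq_zero.mp this
  -- assembling P
  have hS'inv : IsUnit S'⁻¹ := by
    rw [Matrix.isUnit_iff_isUnit_det, Matrix.det_nonsing_inv]
    exact isUnit_iff_ne_zero.mpr (by simp [Ring.inverse_eq_inv', inv_ne_zero hS'd.ne_zero])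
  refine ⟨S'⁻¹ * S, hS'inv.mul hS, ?_, ?_⟩
  · have hPinv : (S'⁻¹ * S)⁻¹ = S⁻¹ * S' := by
      rw [Matrix.mul_inv_rev, Matrix.nonsing_inv_nonsing_inv S' hS'd]
    rw [hPinv]
    have hA'2 : A' = S'⁻¹ * (compN m f) * S' := by
      rw [hN'sim]
      calc A' = (S'⁻¹ * S') * A' * (S'⁻¹ * S') := by rw [hSiS', Matrix.one_mul, Matrix.mul_one]
        _ = S'⁻¹ * (S' * A' * S'⁻¹) * S' := by simp only [Matrix.mul_assoc]
    rw [hA'2, hNsim]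
    simp only [Matrix.mul_assoc]
  · have hPinv : (S'⁻¹ * S)⁻¹ = S⁻¹ * S' := by
      rw [Matrix.mul_inv_rev, Matrix.nonsing_inv_nonsing_inv S' hS'd]
    rw [hPinv]
    have hB'2 : B' = S'⁻¹ * (compN m f - vecMulVec (S' *ᵥ u') (Pi.single 0 1)) * S' := by
      rw [hM'sim]
      calc B' = (S'⁻¹ * S') * B' * (S'⁻¹ * S') := by rw [hSiS', Matrix.one_mul, Matrix.mul_one]
        _ = S'⁻¹ * (S' * B' * S'⁻¹) * S' := by simp only [Matrix.mul_assoc]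
    rw [hB'2, ← hvv, hMsim]
    simp only [Matrix.mul_assoc]
end

section
/- For all real numbers α and β, the complex 2×2 matrices M₀ = e^{−π·i·(α+β)}·[[0, −1], [1, 2·cos((α+β)·π)]], M₁ = [[1, 4·sin(α·π)·sin(β·π)], [0, 1]], and M∞ = e^{π·i·(α+β)}·[[2·cos((α−β)·π), 1], [−1, 0]] satisfy M₀·M₁·M∞ = I, the 2×2 identity matrix. -/
open Matrix Complex

/-- The monodromy generators of the hypergeometric equation `₂F₁(α, β, γ)` in the case
`γ − α − β = 0` multiply to the identity: `M₀·M₁·M∞ = I`. -/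

theorem hypergeometric_monodromy_product (α β : ℝ) :
    (Complex.exp (-(Real.pi : ℂ) * Complex.I * ((α : ℂ) + β)) •
        (!![0, -1; 1, 2 * (Real.cos ((α + β) * Real.pi) : ℂ)] :
          Matrix (Fin 2) (Fin 2) ℂ)) *
      (!![1, 4 * (Real.sin (α * Real.pi) : ℂ) * (Real.sin (β * Real.pi) : ℂ); 0, 1] :
          Matrix (Fin 2) (Fin 2) ℂ) *
      (Complex.exp ((Real.pi : ℂ) * Complex.I * ((α : ℂ) + β)) •
        (!![2 * (Real.cos ((α - β) * Real.pi) : ℂ), 1; -1, 0] :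
          Matrix (Fin 2) (Fin 2) ℂ)) = 1 := by
  have hexp : Complex.exp (-((Real.pi : ℂ) * Complex.I * ((α : ℂ) + β))) *
      Complex.exp ((Real.pi : ℂ) * Complex.I * ((α : ℂ) + β)) = 1 := by
    rw [← Complex.exp_add]; ring_nf; exact Complex.exp_zero
  have key : (2 * Complex.cos (((α : ℂ) - β) * Real.pi)) -
      (4 * Complex.sin ((α : ℂ) * Real.pi) * Complex.sin ((β : ℂ) * Real.pi) +
        2 * Complex.cos (((α : ℂ) + β) * Real.pi)) = 0 := by
    have h1 : ((α : ℂ) - β) * Real.pi = (α : ℂ) * Real.pi - (β : ℂ) * Real.pi := by ring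
    have h2 : ((α : ℂ) + β) * Real.pi = (α : ℂ) * Real.pi + (β : ℂ) * Real.pi := by ring
    rw [h1, h2, Complex.cos_sub, Complex.cos_add]
    ring
  ext i j
  fin_cases i <;> fin_cases j <;>
    simp [Matrix.mul_apply, Fin.sum_univ_succ, Matrix.one_apply, neg_mul] <;>
    first
      | linear_combination hexp
      | linear_combination
          (Complex.exp (-((Real.pi : ℂ) * Complex.I * ((α : ℂ) + β))) *
            Complex.exp ((Real.pi : ℂ) * Complex.I * ((α : ℂ) + β))) * key
end

section
/- Let σ₁, σ₂, σ₃ be the ℂ-algebra endomorphisms of the polynomial ring ℂ[X₀, X₁, X₂, X₃] determined by σ₁ : X₀ ↦ i·X₀, X₁ ↦ −i·X₁, X₂ ↦ X₂, X₃ ↦ X₃; σ₂ : X₀ ↦ X₀, X₁ ↦ i·X₁, X₂ ↦ −i·X₂, X₃ ↦ X₃; σ₃ : X₀ ↦ X₀, X₁ ↦ X₁, X₂ ↦ i·X₂, X₃ ↦ −i·X₃, where i is the imaginary unit. Then a polynomial p ∈ ℂ[X₀, X₁, X₂, X₃] satisfies σ₁(p) = p, σ₂(p) = p and σ₃(p)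 = p if and only if p lies in the ℂ-subalgebra generated by X₀⁴, X₁⁴, X₂⁴, X₃⁴ and X₀·X₁·X₂·X₃. -/
open MvPolynomial

private lemma monomial_eq_prod (d : Fin 4 →₀ ℕ) (a : ℂ) :
    (monomial d a : MvPolynomial (Fin 4) ℂ) = C a * ∏ i, X i ^ d i := by
  rw [monomial_eq, Finsupp.prod_fintype]
  intro i; exact pow_zero _

private lemma aeval_scale_monomial (c : Fin 4 → ℂ) (d : Fin 4 →₀ ℕ) (a : ℂ) :
    aeval (fun i => C (c i) * X i) (monomial d a) =
      monomial d (a * ∏ i, c i ^ d i) := by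
  rw [monomial_eq_prod, monomial_eq_prod, map_mul, map_prod]
  have h1 : ∀ i : Fin 4, (aeval (fun j => C (c j) * X j) : MvPolynomial (Fin 4) ℂ →ₐ[ℂ] MvPolynomial (Fin 4) ℂ) (X i ^ d i)
      = C (c i ^ d i) * X i ^ d i := by
    intro i; rw [map_pow, aeval_X, mul_pow, ← C_pow]
  rw [Finset.prod_congr rfl fun i _ => h1 i, Finset.prod_mul_distrib,
    ← map_prod (C : ℂ →+* MvPolynomial (Fin 4) ℂ), aeval_C, algebraMap_eq, C_mul]
  ring

private lemma coeff_scale (c : Fin 4 → ℂ) (p : MvPolynomial (Fin 4) ℂ) (d : Fin 4 →₀ ℕ) :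
    coeff d (aeval (fun i => C (c i) * X i) p) = (∏ i, c i ^ d i) * coeff d p := by
  conv_lhs => rw [p.as_sum]
  rw [map_sum, coeff_sum]
  simp only [aeval_scale_monomial, coeff_monomial]
  rw [Finset.sum_ite_eq' p.support d]
  by_cases hd : d ∈ p.support
  · simp [hd, mul_comm]
  · simp [hd, notMem_support_iff.mp hd]

private lemma I_pow_mod (n : ℕ) (h : Complex.I ^ n = 1) : n % 4 = 0 := by
  have h4 : Complex.I ^ 4 = 1 := by
    rw [show (4:ℕ) = 2*2 from rfl, pow_mul, Complex.I_sq]; norm_num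
  have hm : Complex.I ^ (n % 4) = 1 := by
    have h' : Complex.I ^ (4 * (n / 4) + n % 4) = 1 := by rw [Nat.div_add_mod]; exact h
    rwa [pow_add, pow_mul, h4, one_pow, one_mul] at h'
  have hcases : n % 4 = 0 ∨ n % 4 = 1 ∨ n % 4 = 2 ∨ n % 4 = 3 := by omega
  rcases hcases with h0|h0|h0|h0
  · exact h0
  all_goals rw [h0] at hm
  all_goals norm_num [pow_succ, Complex.ext_iff, Complex.I_mul_I] at hm

private lemma cong_of (a b : ℕ) (h : Complex.I ^ a * (-Complex.I) ^ b = 1) :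
    a % 4 = b % 4 := by
  have h3 : (-Complex.I) = Complex.I ^ 3 := by
    rw [pow_succ, Complex.I_sq]; ring
  rw [h3, ← pow_mul, ← pow_add] at h
  have := I_pow_mod _ h
  omega

private lemma monomial_mem_adjoin (d : Fin 4 →₀ ℕ) (a : ℂ)
    (h01 : d 0 % 4 = d 1 % 4) (h12 : d 1 % 4 = d 2 % 4) (h23 : d 2 % 4 = d 3 % 4) :
    (monomial d a : MvPolynomial (Fin 4) ℂ) ∈ Algebra.adjoin ℂ
      ({X 0 ^ 4, X 1 ^ 4, X 2 ^ 4, X 3 ^ 4, X 0 * X 1 * X 2 * X 3} :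
        Set (MvPolynomial (Fin 4) ℂ)) := by
  set m := min (min (d 0) (d 1)) (min (d 2) (d 3)) with hm
  obtain ⟨k0, hk0⟩ : ∃ k, d 0 = 4 * k + m := ⟨(d 0 - m) / 4, by omega⟩
  obtain ⟨k1, hk1⟩ : ∃ k, d 1 = 4 * k + m := ⟨(d 1 - m) / 4, by omega⟩
  obtain ⟨k2, hk2⟩ : ∃ k, d 2 = 4 * k + m := ⟨(d 2 - m) / 4, by omega⟩
  obtain ⟨k3, hk3⟩ : ∃ k, d 3 = 4 * k + m := ⟨(d 3 - m) / 4, by omega⟩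
  have heq : (monomial d a : MvPolynomial (Fin 4) ℂ) =
      C a * ((X 0 ^ 4) ^ k0 * (X 1 ^ 4) ^ k1 * (X 2 ^ 4) ^ k2 * (X 3 ^ 4) ^ k3 *
        (X 0 * X 1 * X 2 * X 3) ^ m) := by
    rw [monomial_eq_prod, Fin.prod_univ_four, hk0, hk1, hk2, hk3]
    ring
  have g0 : (X 0 ^ 4 : MvPolynomial (Fin 4) ℂ) ∈ ({X 0 ^ 4, X 1 ^ 4, X 2 ^ 4, X 3 ^ 4, X 0 * X 1 * X 2 * X 3} : Set (MvPolynomial (Fin 4) ℂ)) := Set.mem_insert _ _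
  have g1 : (X 1 ^ 4 : MvPolynomial (Fin 4) ℂ) ∈ ({X 0 ^ 4, X 1 ^ 4, X 2 ^ 4, X 3 ^ 4, X 0 * X 1 * X 2 * X 3} : Set (MvPolynomial (Fin 4) ℂ)) := Set.mem_insert_of_mem _ (Set.mem_insert _ _)
  have g2 : (X 2 ^ 4 : MvPolynomial (Fin 4) ℂ) ∈ ({X 0 ^ 4, X 1 ^ 4, X 2 ^ 4, X 3 ^ 4, X 0 * X 1 * X 2 * X 3} : Set (MvPolynomial (Fin 4) ℂ)) := Set.mem_insert_of_mem _ (Set.mem_insert_of_mem _ (Set.mem_insert _ _))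
  have g3 : (X 3 ^ 4 : MvPolynomial (Fin 4) ℂ) ∈ ({X 0 ^ 4, X 1 ^ 4, X 2 ^ 4, X 3 ^ 4, X 0 * X 1 * X 2 * X 3} : Set (MvPolynomial (Fin 4) ℂ)) := Set.mem_insert_of_mem _ (Set.mem_insert_of_mem _ (Set.mem_insert_of_mem _ (Set.mem_insert _ _)))
  have g4 : (X 0 * X 1 * X 2 * X 3 : MvPolynomial (Fin 4) ℂ) ∈ ({X 0 ^ 4, X 1 ^ 4, X 2 ^ 4, X 3 ^ 4, X 0 * X 1 * X 2 * X 3} : Set (MvPolynomial (Fin 4) ℂ)) := Set.mem_insert_of_mem _ (Set.mem_insert_of_mem _ (Set.mem_insert_of_mem _ (Set.mem_insert_of_mem _ rfl)))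
  rw [heq, ← algebraMap_eq]
  exact Subalgebra.mul_mem _ (Subalgebra.algebraMap_mem _ a)
    (Subalgebra.mul_mem _
      (Subalgebra.mul_mem _
        (Subalgebra.mul_mem _
          (Subalgebra.mul_mem _
            (Subalgebra.pow_mem _ (Algebra.subset_adjoin g0) k0)
            (Subalgebra.pow_mem _ (Algebra.subset_adjoin g1) k1))
          (Subalgebra.pow_mem _ (Algebra.subset_adjoin g2) k2))
        (Subalgebra.pow_mem _ (Algebra.subset_adjoin g3) k3))
      (Subalgebra.pow_mem _ (Algebra.subset_adjoin g4) m))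

/-- The ring of invariants of the diagonal group `C₄ × C₄` of symplectic automorphisms
acting on `ℂ[X₀, X₁, X₂, X₃]` is generated by `X₀⁴, X₁⁴, X₂⁴, X₃⁴, X₀X₁X₂X₃`. -/
theorem invariants_C4_squared
    (σ₁ σ₂ σ₃ : MvPolynomial (Fin 4) ℂ →ₐ[ℂ] MvPolynomial (Fin 4) ℂ)
    (h₁₀ : σ₁ (X 0) = C Complex.I * X 0) (h₁₁ : σ₁ (X 1) = C (-Complex.I) * X 1)
    (h₁₂ : σ₁ (X 2) = X 2) (h₁₃ : σ₁ (X 3) = X 3)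
    (h₂₀ : σ₂ (X 0) = X 0) (h₂₁ : σ₂ (X 1) = C Complex.I * X 1)
    (h₂₂ : σ₂ (X 2) = C (-Complex.I) * X 2) (h₂₃ : σ₂ (X 3) = X 3)
    (h₃₀ : σ₃ (X 0) = X 0) (h₃₁ : σ₃ (X 1) = X 1)
    (h₃₂ : σ₃ (X 2) = C Complex.I * X 2) (h₃₃ : σ₃ (X 3) = C (-Complex.I) * X 3)
    (p : MvPolynomial (Fin 4) ℂ) :
    (σ₁ p = p ∧ σ₂ p = p ∧ σ₃ p = p) ↔
      p ∈ Algebra.adjoin ℂ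
        ({X 0 ^ 4, X 1 ^ 4, X 2 ^ 4, X 3 ^ 4, X 0 * X 1 * X 2 * X 3} :
          Set (MvPolynomial (Fin 4) ℂ)) := by
  have hI4 : Complex.I ^ 4 = 1 := by
    rw [show (4:ℕ) = 2*2 from rfl, pow_mul, Complex.I_sq]; norm_num
  constructor
  · rintro ⟨e1, e2, e3⟩
    have hσ₁ : σ₁ = aeval (fun i => C (![Complex.I, -Complex.I, 1, 1] i) * X i) := by
      apply algHom_ext; intro i
      fin_cases i <;> simp [h₁₀, h₁₁, h₁₂, h₁₃]
    have hσ₂ : σ₂ = aeval (fun i => C (![1, Complex.I, -Complex.I, 1] i) * X i) := by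
      apply algHom_ext; intro i
      fin_cases i <;> simp [h₂₀, h₂₁, h₂₂, h₂₃]
    have hσ₃ : σ₃ = aeval (fun i => C (![1, 1, Complex.I, -Complex.I] i) * X i) := by
      apply algHom_ext; intro i
      fin_cases i <;> simp [h₃₀, h₃₁, h₃₂, h₃₃]
    have key : ∀ d ∈ p.support, d 0 % 4 = d 1 % 4 ∧ d 1 % 4 = d 2 % 4 ∧ d 2 % 4 = d 3 % 4 := by
      intro d hd
      have hne : coeff d p ≠ 0 := mem_support_iff.mp hd
      have w1 : (∏ i, (![Complex.I, -Complex.I, 1, 1]) i ^ d i) = 1 := by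
        have hc := coeff_scale (![Complex.I, -Complex.I, 1, 1]) p d
        rw [← hσ₁, e1] at hc
        exact mul_right_cancel₀ hne (hc.symm.trans (one_mul _).symm)
      have w2 : (∏ i, (![1, Complex.I, -Complex.I, 1]) i ^ d i) = 1 := by
        have hc := coeff_scale (![1, Complex.I, -Complex.I, 1]) p d
        rw [← hσ₂, e2] at hc
        exact mul_right_cancel₀ hne (hc.symm.trans (one_mul _).symm)
      have w3 : (∏ i, (![1, 1, Complex.I, -Complex.I]) i ^ d i) = 1 := by
        have hc := coeff_scale (![1, 1, Complex.I, -Complex.I]) p d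
        rw [← hσ₃, e3] at hc
        exact mul_right_cancel₀ hne (hc.symm.trans (one_mul _).symm)
      rw [Fin.prod_univ_four] at w1 w2 w3
      simp only [Matrix.cons_val_zero, Matrix.cons_val_one, Matrix.head_cons,
        Matrix.cons_val_two, Matrix.tail_cons, Matrix.cons_val_three, one_pow,
        mul_one, one_mul] at w1 w2 w3
      exact ⟨cong_of _ _ w1, cong_of _ _ w2, cong_of _ _ w3⟩
    rw [p.as_sum]
    refine Subalgebra.sum_mem _ fun d hd => ?_
    obtain ⟨h01, h12, h23⟩ := key d hd
    exact monomial_mem_adjoin d _ h01 h12 h23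
  · intro hp
    have hCC : ∀ u v : ℂ, u * v = 1 → ∀ q r : MvPolynomial (Fin 4) ℂ,
        (C u * q) * (C v * r) = q * r := by
      intro u v huv q r
      calc C u * q * (C v * r) = C (u*v) * (q * r) := by rw [C_mul]; ring
        _ = q * r := by rw [huv, C_1, one_mul]
    have fix : ∀ σ : MvPolynomial (Fin 4) ℂ →ₐ[ℂ] MvPolynomial (Fin 4) ℂ,
        σ (X 0 ^ 4) = X 0 ^ 4 → σ (X 1 ^ 4) = X 1 ^ 4 → σ (X 2 ^ 4) = X 2 ^ 4 →
        σ (X 3 ^ 4) = X 3 ^ 4 → σ (X 0 * X 1 * X 2 * X 3) = X 0 * X 1 * X 2 * X 3 →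
        σ p = p := by
      intro σ f0 f1 f2 f3 f4
      have hsub : ({X 0 ^ 4, X 1 ^ 4, X 2 ^ 4, X 3 ^ 4, X 0 * X 1 * X 2 * X 3} :
          Set (MvPolynomial (Fin 4) ℂ)) ⊆ (AlgHom.equalizer σ (AlgHom.id ℂ _) : Set _) := by
        rintro x (rfl | rfl | rfl | rfl | rfl) <;>
          simp only [SetLike.mem_coe, AlgHom.mem_equalizer, AlgHom.id_apply]
        · exact f0
        · exact f1
        · exact f2
        · exact f3
        · exact f4
      exact Algebra.adjoin_le hsub hp
    have hmI4 : (-Complex.I) ^ 4 = 1 := by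
      rw [show -Complex.I = (-1) * Complex.I by ring, mul_pow, hI4]; norm_num
    have pow4 : ∀ (σ : MvPolynomial (Fin 4) ℂ →ₐ[ℂ] MvPolynomial (Fin 4) ℂ)
        (i : Fin 4) (u : ℂ), σ (X i) = C u * X i → u ^ 4 = 1 → σ (X i ^ 4) = X i ^ 4 := by
      intro σ i u h hu
      rw [map_pow, h, mul_pow, ← C_pow, hu, C_1, one_mul]
    have pow4' : ∀ (σ : MvPolynomial (Fin 4) ℂ →ₐ[ℂ] MvPolynomial (Fin 4) ℂ)
        (i : Fin 4), σ (X i) = X i → σ (X i ^ 4) = X i ^ 4 := by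
      intro σ i h; rw [map_pow, h]
    refine ⟨fix σ₁ (pow4 _ _ _ h₁₀ hI4) (pow4 _ _ _ h₁₁ hmI4) (pow4' _ _ h₁₂) (pow4' _ _ h₁₃) ?_,
      fix σ₂ (pow4' _ _ h₂₀) (pow4 _ _ _ h₂₁ hI4) (pow4 _ _ _ h₂₂ hmI4) (pow4' _ _ h₂₃) ?_,
      fix σ₃ (pow4' _ _ h₃₀) (pow4' _ _ h₃₁) (pow4 _ _ _ h₃₂ hI4) (pow4 _ _ _ h₃₃ hmI4) ?_⟩
    · rw [map_mul, map_mul, map_mul, h₁₀, h₁₁, h₁₂, h₁₃,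
        hCC Complex.I (-Complex.I) (by simp [Complex.I_mul_I]) (X 0) (X 1)]
    · rw [map_mul, map_mul, map_mul, h₂₀, h₂₁, h₂₂, h₂₃, mul_assoc (X 0),
        hCC Complex.I (-Complex.I) (by simp [Complex.I_mul_I]) (X 1) (X 2), ← mul_assoc]
    · rw [map_mul, map_mul, map_mul, h₃₀, h₃₁, h₃₂, h₃₃, mul_assoc (X 0 * X 1),
        hCC Complex.I (-Complex.I) (by simp [Complex.I_mul_I]) (X 2) (X 3), ← mul_assoc]
end

section
/- Let Φ : ℂ[Y₀, Y₁, Y₂, Y₃, Y₄] → ℂ[X₀, X₁, X₂, X₃] be the ℂ-algebra homomorphism of multivariate polynomial rings determined by Φ(Y_j) = X_j⁴ for j = 0, 1, 2, 3 and Φ(Y₄) = X₀·X₁·X₂·X₃. Then the kernel of Φ is the principal ideal generated by Y₀·Y₁·Y₂·Y₃ − Y₄⁴. -/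
open MvPolynomial


noncomputable def Emap (m : Fin 5 →₀ ℕ) : Fin 4 →₀ ℕ :=
  Finsupp.equivFunOnFinite.symm (fun j => 4 * m j.castSucc + m 4)

lemma Emap_apply (m : Fin 5 →₀ ℕ) (j : Fin 4) :
    Emap m j = 4 * m j.castSucc + m 4 := rfl

lemma Emap_inj {m m' : Fin 5 →₀ ℕ} (hm : m 4 < 4) (hm' : m' 4 < 4)
    (h : Emap m = Emap m') : m = m' := by
  have h' : ∀ j : Fin 4, 4 * m j.castSucc + m 4 = 4 * m' j.castSucc + m' 4 := by
    intro j; rw [← Emap_apply, ← Emap_apply, h]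
  have h4 : m 4 % 4 = m' 4 % 4 := by have := h' 0; omega
  have h4' : m 4 = m' 4 := by omega
  ext i
  fin_cases i
  · have := h' 0; simpa [h4'] using this
  · have := h' 1; have e : (Fin.castSucc 1 : Fin 5) = 1 := by decide
    rw [e] at this; exact (by omega : m 1 = m' 1)
  · have := h' 2; have e : (Fin.castSucc 2 : Fin 5) = 2 := by decide
    rw [e] at this; exact (by omega : m 2 = m' 2)
  · have := h' 3; have e : (Fin.castSucc 3 : Fin 5) = 3 := by decide
    rw [e] at this; exact (by omega : m 3 = m' 3)
  · exact h4'

lemma pow_sub_mem (k : ℕ) :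
    (X 4 : MvPolynomial (Fin 5) ℂ) ^ k -
      (X 0 * X 1 * X 2 * X 3) ^ (k / 4) * X 4 ^ (k % 4) ∈
      Ideal.span ({X 0 * X 1 * X 2 * X 3 - X 4 ^ 4} : Set (MvPolynomial (Fin 5) ℂ)) := by
  induction k using Nat.strong_induction_on with
  | _ k ih =>
    by_cases hk : k < 4
    · rw [Nat.div_eq_of_lt hk, Nat.mod_eq_of_lt hk]; simp
    · push_neg at hk
      obtain ⟨k', rfl⟩ : ∃ k', k = k' + 4 := ⟨k - 4, by omega⟩
      have h1 := ih k' (by omega)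
      have hdiv : (k' + 4) / 4 = k' / 4 + 1 := by omega
      have hmod : (k' + 4) % 4 = k' % 4 := by omega
      rw [hdiv, hmod]
      have key : (X 4 : MvPolynomial (Fin 5) ℂ) ^ (k' + 4) -
          (X 0 * X 1 * X 2 * X 3) ^ (k' / 4 + 1) * X 4 ^ (k' % 4)
          = (-(X 4 ^ k')) * (X 0 * X 1 * X 2 * X 3 - X 4 ^ 4)
            + (X 0 * X 1 * X 2 * X 3) *
              (X 4 ^ k' - (X 0 * X 1 * X 2 * X 3) ^ (k' / 4) * X 4 ^ (k' % 4)) := by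
        ring
      rw [key]
      exact add_mem (Ideal.mul_mem_left _ _ (Ideal.subset_span (Set.mem_singleton _)))
        (Ideal.mul_mem_left _ _ h1)

lemma exists_reduced (P : MvPolynomial (Fin 5) ℂ) :
    ∃ R : MvPolynomial (Fin 5) ℂ,
      P - R ∈ Ideal.span ({X 0 * X 1 * X 2 * X 3 - X 4 ^ 4} :
        Set (MvPolynomial (Fin 5) ℂ)) ∧
      ∀ m ∈ R.support, m 4 < 4 := by
  induction P using MvPolynomial.induction_on' with
  | add p q hp hq =>
      obtain ⟨R1, hR1, hred1⟩ := hp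
      obtain ⟨R2, hR2, hred2⟩ := hq
      refine ⟨R1 + R2, ?_, ?_⟩
      · have : p + q - (R1 + R2) = (p - R1) + (q - R2) := by ring
        rw [this]; exact add_mem hR1 hR2
      · intro m hm
        rcases Finset.mem_union.1 (MvPolynomial.support_add hm) with h | h
        · exact hred1 m h
        · exact hred2 m h
  | monomial u a =>
      refine ⟨monomial (u.update 4 0) a * (X 0 * X 1 * X 2 * X 3) ^ (u 4 / 4)
        * X 4 ^ (u 4 % 4), ?_, ?_⟩
      · have hsum : u.update 4 0 + Finsupp.single 4 (u 4) = u := by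
          ext i
          by_cases hi : i = (4 : Fin 5)
          · subst hi; simp
          · simp [Finsupp.update, Finsupp.single_apply, hi, Ne.symm hi, Function.update_of_ne hi]
        have hu : monomial u a = monomial (u.update 4 0) a * X 4 ^ (u 4) := by
          rw [X_pow_eq_monomial, monomial_mul, hsum, mul_one]
        have : monomial u a - monomial (u.update 4 0) a * (X 0 * X 1 * X 2 * X 3) ^ (u 4 / 4)
            * X 4 ^ (u 4 % 4)
            = monomial (u.update 4 0) a *
              (X 4 ^ (u 4) - (X 0 * X 1 * X 2 * X 3) ^ (u 4 / 4) * X 4 ^ (u 4 % 4)) := by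
          rw [hu]; ring
        rw [this]
        exact Ideal.mul_mem_left _ _ (pow_sub_mem (u 4))
      · intro m hm
        have hX : (X 0 * X 1 * X 2 * X 3 : MvPolynomial (Fin 5) ℂ)
            = monomial (Finsupp.single 0 1 + Finsupp.single 1 1 + Finsupp.single 2 1
              + Finsupp.single 3 1) 1 := by
          simp [X, monomial_mul]
        rw [hX, monomial_pow, X_pow_eq_monomial, monomial_mul, monomial_mul] at hm
        have := MvPolynomial.support_monomial_subset hm
        rw [Finset.mem_singleton] at this
        subst this
        simp [Finsupp.update, Finsupp.single_apply]
        omega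

lemma Phi_monomial (Φ : MvPolynomial (Fin 5) ℂ →ₐ[ℂ] MvPolynomial (Fin 4) ℂ)
    (h0 : Φ (X 0) = X 0 ^ 4) (h1 : Φ (X 1) = X 1 ^ 4)
    (h2 : Φ (X 2) = X 2 ^ 4) (h3 : Φ (X 3) = X 3 ^ 4)
    (h4 : Φ (X 4) = X 0 * X 1 * X 2 * X 3)
    (m : Fin 5 →₀ ℕ) (c : ℂ) :
    Φ (monomial m c) = monomial (Emap m) c := by
  have hL : (monomial m c : MvPolynomial (Fin 5) ℂ) = C c * ∏ i : Fin 5, X i ^ m i := by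
    rw [monomial_eq, Finsupp.prod_pow]
  have hR : (monomial (Emap m) c : MvPolynomial (Fin 4) ℂ)
      = C c * ∏ j : Fin 4, X j ^ Emap m j := by
    rw [monomial_eq, Finsupp.prod_pow]
  rw [hL, hR, map_mul, map_prod]
  have hC : Φ (C c) = C c := by
    rw [← MvPolynomial.algebraMap_eq, AlgHom.commutes, MvPolynomial.algebraMap_eq]
  rw [hC, Fin.prod_univ_five, Fin.prod_univ_four]
  rw [map_pow, map_pow, map_pow, map_pow, map_pow, h0, h1, h2, h3, h4]
  have e0 : Emap m 0 = 4 * m 0 + m 4 := rfl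
  have e1 : Emap m 1 = 4 * m 1 + m 4 := rfl
  have e2 : Emap m 2 = 4 * m 2 + m 4 := rfl
  have e3 : Emap m 3 = 4 * m 3 + m 4 := rfl
  rw [e0, e1, e2, e3]
  ring

lemma reduced_inj (Φ : MvPolynomial (Fin 5) ℂ →ₐ[ℂ] MvPolynomial (Fin 4) ℂ)
    (h0 : Φ (X 0) = X 0 ^ 4) (h1 : Φ (X 1) = X 1 ^ 4)
    (h2 : Φ (X 2) = X 2 ^ 4) (h3 : Φ (X 3) = X 3 ^ 4)
    (h4 : Φ (X 4) = X 0 * X 1 * X 2 * X 3)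
    (P : MvPolynomial (Fin 5) ℂ) (hred : ∀ m ∈ P.support, m 4 < 4)
    (hP : Φ P = 0) : P = 0 := by
  by_contra hne
  obtain ⟨m₀, hm₀⟩ := (MvPolynomial.support_nonempty.2 hne)
  have hPsum : P = ∑ m ∈ P.support, monomial m (coeff m P) :=
    (MvPolynomial.support_sum_monomial_coeff P).symm
  have hΦ : Φ P = ∑ m ∈ P.support, monomial (Emap m) (coeff m P) := by
    conv_lhs => rw [hPsum]
    rw [map_sum]
    exact Finset.sum_congr rfl fun m _ => Phi_monomial Φ h0 h1 h2 h3 h4 m (coeff m P)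
  have hcoeff : coeff (Emap m₀) (Φ P) = coeff m₀ P := by
    rw [hΦ, MvPolynomial.coeff_sum]
    rw [Finset.sum_eq_single_of_mem m₀ hm₀]
    · rw [coeff_monomial, if_pos rfl]
    · intro m hm hne'
      rw [coeff_monomial, if_neg]
      intro he
      exact hne' (Emap_inj (hred m hm) (hred m₀ hm₀) he)
  rw [hP] at hcoeff
  simp at hcoeff
  exact (MvPolynomial.mem_support_iff.1 hm₀) hcoeff.symm

/-- The presentation `ℂ[x₀⁴, x₁⁴, x₂⁴, x₃⁴, x₀x₁x₂x₃] ≅ ℂ[Y₀,…,Y₄]/(Y₀Y₁Y₂Y₃ − Y₄⁴)`: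
the kernel of `Φ : Y_j ↦ X_j⁴ (j ≤ 3), Y₄ ↦ X₀X₁X₂X₃` is generated by
`Y₀Y₁Y₂Y₃ − Y₄⁴`. -/
theorem ker_invariant_presentation
    (Φ : MvPolynomial (Fin 5) ℂ →ₐ[ℂ] MvPolynomial (Fin 4) ℂ)
    (h0 : Φ (X 0) = X 0 ^ 4) (h1 : Φ (X 1) = X 1 ^ 4)
    (h2 : Φ (X 2) = X 2 ^ 4) (h3 : Φ (X 3) = X 3 ^ 4)
    (h4 : Φ (X 4) = X 0 * X 1 * X 2 * X 3) :
    RingHom.ker Φ = Ideal.span ({X 0 * X 1 * X 2 * X 3 - X 4 ^ 4} :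
      Set (MvPolynomial (Fin 5) ℂ)) := by

  have hsub : Ideal.span ({X 0 * X 1 * X 2 * X 3 - X 4 ^ 4} :
      Set (MvPolynomial (Fin 5) ℂ)) ≤ RingHom.ker Φ := by
    rw [Ideal.span_le, Set.singleton_subset_iff]
    show Φ _ = 0
    rw [map_sub, map_pow, map_mul, map_mul, map_mul, h0, h1, h2, h3, h4]
    ring
  refine le_antisymm ?_ hsub
  intro P hP
  obtain ⟨R, hPR, hred⟩ := exists_reduced P
  have hRker : Φ R = 0 := by
    have h1' : Φ (P - R) = 0 := hsub hPR
    have h2' : Φ P = 0 := hP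
    rw [map_sub, h2'] at h1'
    linear_combination -h1'
  have hR0 : R = 0 := reduced_inj Φ h0 h1 h2 h3 h4 R hred hRker
  rw [hR0, sub_zero] at hPR
  exact hPR
end

section
/- Let υ ∈ ℂ be a primitive 6th root of unity, and let σ₁, σ₂ be the ℂ-algebra endomorphisms of ℂ[X₀, X₁, X₂] determined by σ₁ : X₀ ↦ X₀, X₁ ↦ υ·X₁, X₂ ↦ υ⁵·X₂ and σ₂ : X₀ ↦ υ·X₀, X₁ ↦ υ⁵·X₁, X₂ ↦ X₂. Then a polynomial p ∈ ℂ[X₀, X₁, X₂] satisfies σ₁(p) = p and σ₂(p) = p if and only if p lies in the ℂ-subalgebra generated by X₀⁶, X₁⁶, X₂⁶ and X₀·X₁·X₂. -/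
open MvPolynomial

lemma mono3 (a : Fin 3 →₀ ℕ) (c : ℂ) :
    monomial a c = C c * (X 0 ^ a 0 * X 1 ^ a 1 * X 2 ^ a 2) := by
  rw [monomial_eq, Finsupp.prod_pow, Fin.prod_univ_three]

lemma sigma_mono (υ : ℂ) (σ : MvPolynomial (Fin 3) ℂ →ₐ[ℂ] MvPolynomial (Fin 3) ℂ)
    (e₀ e₁ e₂ : ℕ)
    (h0 : σ (X 0) = C (υ ^ e₀) * X 0) (h1 : σ (X 1) = C (υ ^ e₁) * X 1)
    (h2 : σ (X 2) = C (υ ^ e₂) * X 2) (a : Fin 3 →₀ ℕ) (c : ℂ) :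
    σ (monomial a c) = C (υ ^ (e₀ * a 0 + e₁ * a 1 + e₂ * a 2)) * monomial a c := by
  have hC : ∀ z : ℂ, σ (C z) = C z := fun z => σ.commutes z
  rw [mono3, map_mul, map_mul, map_mul, map_pow, map_pow, map_pow,
    h0, h1, h2, hC, mul_pow, mul_pow, mul_pow, ← C_pow, ← C_pow, ← C_pow,
    ← pow_mul, ← pow_mul, ← pow_mul]
  rw [pow_add, pow_add, C_mul, C_mul]
  ring

lemma coeff_sigma (υ : ℂ) (σ : MvPolynomial (Fin 3) ℂ →ₐ[ℂ] MvPolynomial (Fin 3) ℂ)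
    (w : (Fin 3 →₀ ℕ) → ℕ)
    (hσ : ∀ a c, σ (monomial a c) = C (υ ^ w a) * monomial a c)
    (p : MvPolynomial (Fin 3) ℂ) (b : Fin 3 →₀ ℕ) :
    coeff b (σ p) = υ ^ w b * coeff b p := by
  conv_lhs => rw [p.as_sum]
  rw [map_sum]
  simp_rw [hσ]
  rw [coeff_sum]
  simp_rw [coeff_C_mul, coeff_monomial]
  rw [Finset.sum_eq_single b]
  · simp
  · intro v _ hv
    simp [hv]
  · intro hb
    simp [MvPolynomial.notMem_support_iff.mp hb]

/-- The ring of invariants of the diagonal group `C₂ × C₆` of symplectic automorphisms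
acting on `ℂ[X₀, X₁, X₂]` is generated by `X₀⁶, X₁⁶, X₂⁶, X₀X₁X₂`. -/
theorem invariants_C2_times_C6
    (υ : ℂ) (hυ : IsPrimitiveRoot υ 6)
    (σ₁ σ₂ : MvPolynomial (Fin 3) ℂ →ₐ[ℂ] MvPolynomial (Fin 3) ℂ)
    (h₁₀ : σ₁ (X 0) = X 0) (h₁₁ : σ₁ (X 1) = C υ * X 1) (h₁₂ : σ₁ (X 2) = C (υ ^ 5) * X 2)
    (h₂₀ : σ₂ (X 0) = C υ * X 0) (h₂₁ : σ₂ (X 1) = C (υ ^ 5) * X 1) (h₂₂ : σ₂ (X 2) = X 2)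
    (p : MvPolynomial (Fin 3) ℂ) :
    (σ₁ p = p ∧ σ₂ p = p) ↔
      p ∈ Algebra.adjoin ℂ
        ({X 0 ^ 6, X 1 ^ 6, X 2 ^ 6, X 0 * X 1 * X 2} : Set (MvPolynomial (Fin 3) ℂ)) := by
  have h6 : υ ^ 6 = 1 := hυ.pow_eq_one
  have h₁₀' : σ₁ (X 0) = C (υ ^ 0) * X 0 := by simp [h₁₀]
  have h₁₁' : σ₁ (X 1) = C (υ ^ 1) * X 1 := by simp [h₁₁]
  have h₂₂' : σ₂ (X 2) = C (υ ^ 0) * X 2 := by simp [h₂₂]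
  have h₂₀' : σ₂ (X 0) = C (υ ^ 1) * X 0 := by simp [h₂₀]
  have hm1 := sigma_mono υ σ₁ 0 1 5 h₁₀' h₁₁' h₁₂
  have hm2 := sigma_mono υ σ₂ 1 5 0 h₂₀' h₂₁ h₂₂'
  have hc1 := coeff_sigma υ σ₁ _ hm1 p
  have hc2 := coeff_sigma υ σ₂ _ hm2 p
  constructor
  · rintro ⟨hp1, hp2⟩
    -- each exponent in the support satisfies the congruences
    rw [p.as_sum]
    apply Subalgebra.sum_mem
    intro b hb
    have hcb : coeff b p ≠ 0 := MvPolynomial.mem_support_iff.mp hb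
    have e1 : υ ^ (0 * b 0 + 1 * b 1 + 5 * b 2) = 1 := by
      have h := hc1 b
      rw [hp1] at h
      exact mul_right_cancel₀ hcb (h.symm.trans (one_mul _).symm)
    have e2 : υ ^ (1 * b 0 + 5 * b 1 + 0 * b 2) = 1 := by
      have h := hc2 b
      rw [hp2] at h
      exact mul_right_cancel₀ hcb (h.symm.trans (one_mul _).symm)
    have d1 : 6 ∣ 0 * b 0 + 1 * b 1 + 5 * b 2 := (hυ.pow_eq_one_iff_dvd _).mp e1
    have d2 : 6 ∣ 1 * b 0 + 5 * b 1 + 0 * b 2 := (hυ.pow_eq_one_iff_dvd _).mp e2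
    -- common residue
    obtain ⟨r, q0, q1, q2, hb0, hb1, hb2⟩ :
        ∃ r q0 q1 q2, b 0 = 6 * q0 + r ∧ b 1 = 6 * q1 + r ∧ b 2 = 6 * q2 + r := by
      refine ⟨b 0 % 6, b 0 / 6, b 1 / 6, b 2 / 6, by omega, by omega, by omega⟩
    rw [mono3]
    have key : (X 0 : MvPolynomial (Fin 3) ℂ) ^ b 0 * X 1 ^ b 1 * X 2 ^ b 2 =
        (X 0 ^ 6) ^ q0 * (X 1 ^ 6) ^ q1 * (X 2 ^ 6) ^ q2 * (X 0 * X 1 * X 2) ^ r := by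
      rw [hb0, hb1, hb2]
      rw [pow_add, pow_add, pow_add, ← pow_mul, ← pow_mul, ← pow_mul]
      ring
    rw [key]
    have hX0 : (X 0 : MvPolynomial (Fin 3) ℂ) ^ 6 ∈ Algebra.adjoin ℂ
        ({X 0 ^ 6, X 1 ^ 6, X 2 ^ 6, X 0 * X 1 * X 2} : Set (MvPolynomial (Fin 3) ℂ)) :=
      Algebra.subset_adjoin (by simp)
    have hX1 : (X 1 : MvPolynomial (Fin 3) ℂ) ^ 6 ∈ Algebra.adjoin ℂ
        ({X 0 ^ 6, X 1 ^ 6, X 2 ^ 6, X 0 * X 1 * X 2} : Set (MvPolynomial (Fin 3) ℂ)) :=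
      Algebra.subset_adjoin (by simp)
    have hX2 : (X 2 : MvPolynomial (Fin 3) ℂ) ^ 6 ∈ Algebra.adjoin ℂ
        ({X 0 ^ 6, X 1 ^ 6, X 2 ^ 6, X 0 * X 1 * X 2} : Set (MvPolynomial (Fin 3) ℂ)) :=
      Algebra.subset_adjoin (by simp)
    have hXXX : (X 0 * X 1 * X 2 : MvPolynomial (Fin 3) ℂ) ∈ Algebra.adjoin ℂ
        ({X 0 ^ 6, X 1 ^ 6, X 2 ^ 6, X 0 * X 1 * X 2} : Set (MvPolynomial (Fin 3) ℂ)) :=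
      Algebra.subset_adjoin (by simp)
    have : (C (coeff b p) : MvPolynomial (Fin 3) ℂ) * _ = coeff b p •
      ((X 0 ^ 6) ^ q0 * (X 1 ^ 6) ^ q1 * (X 2 ^ 6) ^ q2 * (X 0 * X 1 * X 2) ^ r) :=
      (Algebra.smul_def _ _).symm
    rw [this]
    exact Subalgebra.smul_mem _ (mul_mem (mul_mem (mul_mem (pow_mem hX0 q0) (pow_mem hX1 q1))
      (pow_mem hX2 q2)) (pow_mem hXXX r)) _
  · intro hp
    have h56 : (υ ^ 5) ^ 6 = 1 := by
      rw [← pow_mul, show (5 * 6 : ℕ) = 6 * 5 from rfl, pow_mul, h6, one_pow]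
    have hmul : υ * υ ^ 5 = 1 := by linear_combination h6
    have g10 : σ₁ (X 0 ^ 6) = X 0 ^ 6 := by rw [map_pow, h₁₀]
    have g11 : σ₁ (X 1 ^ 6) = X 1 ^ 6 := by
      rw [map_pow, h₁₁, mul_pow, ← C_pow, h6, C_1, one_mul]
    have g12 : σ₁ (X 2 ^ 6) = X 2 ^ 6 := by
      rw [map_pow, h₁₂, mul_pow, ← C_pow, h56, C_1, one_mul]
    have g13 : σ₁ (X 0 * X 1 * X 2) = X 0 * X 1 * X 2 := by
      rw [map_mul, map_mul, h₁₀, h₁₁, h₁₂,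
        show (X 0 : MvPolynomial (Fin 3) ℂ) * (C υ * X 1) * (C (υ ^ 5) * X 2)
          = C (υ * υ ^ 5) * (X 0 * X 1 * X 2) by rw [C_mul]; ring,
        hmul, C_1, one_mul]
    have g20 : σ₂ (X 0 ^ 6) = X 0 ^ 6 := by
      rw [map_pow, h₂₀, mul_pow, ← C_pow, h6, C_1, one_mul]
    have g21 : σ₂ (X 1 ^ 6) = X 1 ^ 6 := by
      rw [map_pow, h₂₁, mul_pow, ← C_pow, h56, C_1, one_mul]
    have g22 : σ₂ (X 2 ^ 6) = X 2 ^ 6 := by rw [map_pow, h₂₂]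
    have g23 : σ₂ (X 0 * X 1 * X 2) = X 0 * X 1 * X 2 := by
      rw [map_mul, map_mul, h₂₀, h₂₁, h₂₂,
        show (C υ * X 0 : MvPolynomial (Fin 3) ℂ) * (C (υ ^ 5) * X 1) * X 2
          = C (υ * υ ^ 5) * (X 0 * X 1 * X 2) by rw [C_mul]; ring,
        hmul, C_1, one_mul]
    have hle : Algebra.adjoin ℂ
        ({X 0 ^ 6, X 1 ^ 6, X 2 ^ 6, X 0 * X 1 * X 2} : Set (MvPolynomial (Fin 3) ℂ)) ≤
        AlgHom.equalizer σ₁ (AlgHom.id ℂ _) ⊓ AlgHom.equalizer σ₂ (AlgHom.id ℂ _) := by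
      apply Algebra.adjoin_le
      rintro q hq
      simp only [Set.mem_insert_iff, Set.mem_singleton_iff] at hq
      rw [SetLike.mem_coe, Algebra.mem_inf, AlgHom.mem_equalizer, AlgHom.mem_equalizer]
      rcases hq with rfl | rfl | rfl | rfl
      · exact ⟨g10, g20⟩
      · exact ⟨g11, g21⟩
      · exact ⟨g12, g22⟩
      · exact ⟨g13, g23⟩
    obtain ⟨h1, h2⟩ := Algebra.mem_inf.mp (hle hp)
    exact ⟨h1, h2⟩
end

section
/- Let M₁ = (1/√2)·[[1, 1], [−1, 1]] and M∞ = (1/√2)·[[1, 2+√3], [−2+√3, 1]], real 2×2 matrices. Then M₁⁴ = −I and M∞⁴ = −I (so both have order 4 as projective transformations), yet for every integer n ≥ 1 the power (M₁·M∞⁻¹)ⁿ is not a scalar multiple of the identity matrix; in particular the subgroup of PGL(2,ℝ) generated by the images of M₁ and M∞ is infinite. -/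
open Matrix

noncomputable def Cmat : Matrix (Fin 2) (Fin 2) ℝ :=
  !![(3 - Real.sqrt 3)/2, -(1 + Real.sqrt 3)/2; (1 - Real.sqrt 3)/2, (3 + Real.sqrt 3)/2]

lemma h3 : Real.sqrt 3 * Real.sqrt 3 = 3 := Real.mul_self_sqrt (by norm_num)
lemma h2 : Real.sqrt 2 * Real.sqrt 2 = 2 := Real.mul_self_sqrt (by norm_num)

lemma c4 : ((Real.sqrt 2)⁻¹ : ℝ)^4 = 1/4 := by
  rw [inv_pow]
  have : (Real.sqrt 2)^4 = 4 := by nlinarith [h2]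
  rw [this]; norm_num

lemma pow1 : ((Real.sqrt 2)⁻¹ • (!![1, 1; -1, 1] : Matrix (Fin 2) (Fin 2) ℝ)) ^ 4 = -1 := by
  rw [smul_pow, c4]
  have e1 : (!![1, 1; -1, 1] : Matrix (Fin 2) (Fin 2) ℝ)^2 = !![0,2;-2,0] := by
    rw [pow_two]
    ext i j; fin_cases i <;> fin_cases j <;>
      simp [Matrix.mul_apply, Fin.sum_univ_two] <;> norm_num
  have e2 : (!![1, 1; -1, 1] : Matrix (Fin 2) (Fin 2) ℝ)^4 = (!![0,2;-2,0])^2 := by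
    rw [← e1, ← pow_mul]
  rw [e2]
  rw [pow_two]
  ext i j; fin_cases i <;> fin_cases j <;>
    simp [Matrix.mul_apply, Fin.sum_univ_two, Matrix.one_apply] <;> norm_num

lemma pow2 : ((Real.sqrt 2)⁻¹ •
    (!![1, 2 + Real.sqrt 3; -2 + Real.sqrt 3, 1] : Matrix (Fin 2) (Fin 2) ℝ)) ^ 4 = -1 := by
  rw [smul_pow, c4]
  have e1 : (!![1, 2 + Real.sqrt 3; -2 + Real.sqrt 3, 1] : Matrix (Fin 2) (Fin 2) ℝ)^2
      = !![0, 2*(2+Real.sqrt 3); 2*(-2+Real.sqrt 3), 0] := by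
    rw [pow_two]
    ext i j; fin_cases i <;> fin_cases j <;>
      simp [Matrix.mul_apply, Fin.sum_univ_two] <;> nlinarith [h3]
  have e2 : (!![1, 2 + Real.sqrt 3; -2 + Real.sqrt 3, 1] : Matrix (Fin 2) (Fin 2) ℝ)^4
      = (!![0, 2*(2+Real.sqrt 3); 2*(-2+Real.sqrt 3), 0])^2 := by
    rw [← e1, ← pow_mul]
  rw [e2, pow_two]
  ext i j; fin_cases i <;> fin_cases j <;>
    simp [Matrix.mul_apply, Fin.sum_univ_two, Matrix.one_apply] <;> nlinarith [h3]

lemma hinv : ((Real.sqrt 2)⁻¹ •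
    (!![1, 2 + Real.sqrt 3; -2 + Real.sqrt 3, 1] : Matrix (Fin 2) (Fin 2) ℝ))⁻¹
    = (Real.sqrt 2)⁻¹ • !![1, -(2 + Real.sqrt 3); 2 - Real.sqrt 3, 1] := by
  apply inv_eq_right_inv
  ext i j
  fin_cases i <;> fin_cases j <;>
    simp [Matrix.mul_apply, Fin.sum_univ_two, Matrix.one_apply] <;>
    field_simp <;> nlinarith [h2, h3]

lemma hC : ((Real.sqrt 2)⁻¹ • (!![1, 1; -1, 1] : Matrix (Fin 2) (Fin 2) ℝ)) *
    ((Real.sqrt 2)⁻¹ •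
      (!![1, 2 + Real.sqrt 3; -2 + Real.sqrt 3, 1] : Matrix (Fin 2) (Fin 2) ℝ))⁻¹ = Cmat := by
  rw [hinv]
  ext i j
  fin_cases i <;> fin_cases j <;>
    simp [Cmat, Matrix.mul_apply, Fin.sum_univ_two] <;>
    field_simp <;> rw [Real.sq_sqrt (show (0:ℝ) ≤ 2 by norm_num)] <;> nlinarith [h2, h3]

def aseq : ℕ → ℤ
  | 0 => 0
  | 1 => 1
  | (n+2) => 3 * aseq (n+1) - aseq n

lemma aseq_pos : ∀ n, 0 < aseq (n+1) ∧ aseq (n+1) ≤ aseq (n+2) := by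
  intro n
  induction n with
  | zero => simp [aseq]
  | succ k ih =>
    have h1 := ih.1; have h2 := ih.2
    have e : aseq (k+3) = 3 * aseq (k+2) - aseq (k+1) := rfl
    constructor
    · linarith
    · rw [e]; linarith

lemma cayley : Cmat * Cmat = (3:ℝ) • Cmat - 1 := by
  ext i j; fin_cases i <;> fin_cases j <;>
    simp [Cmat, Matrix.mul_apply, Fin.sum_univ_two, Matrix.one_apply] <;> nlinarith [h3]

lemma pow_formula : ∀ m : ℕ, Cmat ^ (m+1) = (aseq (m+1) : ℝ) • Cmat - (aseq m : ℝ) • 1 := by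
  intro m
  induction m with
  | zero => simp [aseq]
  | succ k ih =>
    have e : aseq (k+2) = 3 * aseq (k+1) - aseq k := rfl
    rw [pow_succ, ih, e]
    rw [sub_mul, smul_mul_assoc, smul_mul_assoc, cayley, one_mul]
    push_cast
    ext i j
    simp [Matrix.sub_apply, Matrix.smul_apply, Matrix.one_apply]
    split_ifs <;> ring

lemma cmat01 : Cmat 0 1 = -(1 + Real.sqrt 3)/2 := by simp [Cmat]

lemma not_scalar : ∀ n : ℕ, 1 ≤ n → ∀ c : ℝ, Cmat ^ n ≠ c • (1 : Matrix (Fin 2) (Fin 2) ℝ) := by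
  intro n hn c hEq
  obtain ⟨m, rfl⟩ := Nat.exists_eq_add_of_le hn
  rw [add_comm] at hEq
  rw [pow_formula m] at hEq
  have := congrFun (congrFun hEq 0) 1
  simp [Matrix.sub_apply, Matrix.smul_apply, Matrix.one_apply, cmat01] at this
  have hpos : (0:ℝ) < (aseq (m+1) : ℝ) := by exact_mod_cast (aseq_pos m).1
  have h3n : (0:ℝ) ≤ Real.sqrt 3 := Real.sqrt_nonneg 3
  rcases this with h | h
  · rw [h] at hpos; norm_num at hpos
  · linarith

/-- The projective monodromy generators of `₂F₁(1/3, 1/12, 2/3)` satisfy `M₁⁴ = −I` and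
`M∞⁴ = −I`, yet no positive power of `M₁·M∞⁻¹` is a scalar matrix; in particular the
group they generate in `PGL(2,ℝ)` is infinite. -/
theorem finite_order_generators_infinite_group :
    ((Real.sqrt 2)⁻¹ • (!![1, 1; -1, 1] : Matrix (Fin 2) (Fin 2) ℝ)) ^ 4 = -1 ∧
    ((Real.sqrt 2)⁻¹ •
        (!![1, 2 + Real.sqrt 3; -2 + Real.sqrt 3, 1] : Matrix (Fin 2) (Fin 2) ℝ)) ^ 4 = -1 ∧
    ∀ n : ℕ, 1 ≤ n → ∀ c : ℝ,
      (((Real.sqrt 2)⁻¹ • (!![1, 1; -1, 1] : Matrix (Fin 2) (Fin 2) ℝ)) *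
          ((Real.sqrt 2)⁻¹ •
            (!![1, 2 + Real.sqrt 3; -2 + Real.sqrt 3, 1] : Matrix (Fin 2) (Fin 2) ℝ))⁻¹) ^ n
        ≠ c • (1 : Matrix (Fin 2) (Fin 2) ℝ) := by
  refine ⟨pow1, pow2, ?_⟩
  intro n hn c
  rw [hC]
  exact not_scalar n hn c
end
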